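/- arXiv:1409.4126 — 6 statements merged into one kernel-verified Lean document; each statement's English description precedes it below -/
import Mathlib

section
/- Let n ≥ 1 and let T : 𝔻 → B(ℂⁿ) assign to each point of the open unit disc a bounded linear operator on ℂⁿ. Suppose that for every holomorphic function f : 𝔻 → ℂⁿ with ∫_𝔻 ‖f(z)‖² dA(z) < ∞, both functions z ↦ T(z)(f(z)) and z ↦ (T(z))*(f(z)) are holomorphic on 𝔻. Then T is constant: there exists a single bounded operator A on ℂⁿ such that T(λ) = A for all λ ∈ 𝔻. (This is the content of the lemma that a decomposable operator on L²(𝔻, ℂⁿ) commuting with the projection onto the Bergman space L²_a(𝔻, ℂⁿ) is a constant.) -/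
open MeasureTheory Metric
open scoped ENNReal


/-- If `f` and its complex conjugate are both complex differentiable at `z`,
then the derivative of `f` at `z` vanishes. -/
lemma deriv_eq_zero_of_conj_diff {f : ℂ → ℂ} {z : ℂ}
    (hf : DifferentiableAt ℂ f z)
    (hg : DifferentiableAt ℂ (fun w => (starRingEnd ℂ) (f w)) z) :
    deriv f z = 0 := by
  set d := deriv f z with hdd
  set c := deriv (fun w => (starRingEnd ℂ) (f w)) z with hcc
  have hd : HasDerivAt f d z := hf.hasDerivAt
  have hc : HasDerivAt (fun w => (starRingEnd ℂ) (f w)) c z := hg.hasDerivAt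
  have h1 : HasFDerivAt (fun w => (starRingEnd ℂ) (f w))
      ((Complex.conjCLE : ℂ →L[ℝ] ℂ).comp
        ((ContinuousLinearMap.smulRight (1 : ℂ →L[ℂ] ℂ) d).restrictScalars ℝ)) z := by
    exact (Complex.conjCLE.hasFDerivAt).comp z (hd.hasFDerivAt.restrictScalars ℝ)
  have h2 : HasFDerivAt (fun w => (starRingEnd ℂ) (f w))
      ((ContinuousLinearMap.smulRight (1 : ℂ →L[ℂ] ℂ) c).restrictScalars ℝ) z :=
    hc.hasFDerivAt.restrictScalars ℝ
  have heq := h1.unique h2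
  have e1 : (starRingEnd ℂ) d = c := by
    have := congrFun (congrArg DFunLike.coe heq) 1
    simpa using this
  have e2 : -(Complex.I * (starRingEnd ℂ) d) = Complex.I * c := by
    have := congrFun (congrArg DFunLike.coe heq) Complex.I
    simpa using this
  rw [e1] at e2
  have h3 : c * Complex.I = 0 := by linear_combination -e2 / 2
  have hc0 : c = 0 := (mul_eq_zero.mp h3).resolve_right Complex.I_ne_zero
  have hconjd : (starRingEnd ℂ) d = 0 := by rw [e1, hc0]
  simpa using congrArg (starRingEnd ℂ) hconjd

/-- A function on the unit ball which is holomorphic together with its conjugate is constant. -/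
lemma const_of_conj_diff {f : ℂ → ℂ}
    (hf : DifferentiableOn ℂ f (ball (0 : ℂ) 1))
    (hg : DifferentiableOn ℂ (fun w => (starRingEnd ℂ) (f w)) (ball (0 : ℂ) 1))
    {x y : ℂ} (hx : x ∈ ball (0 : ℂ) 1) (hy : y ∈ ball (0 : ℂ) 1) :
    f x = f y := by
  have hopen : IsOpen (ball (0 : ℂ) 1) := isOpen_ball
  apply (convex_ball (0:ℂ) 1).is_const_of_fderivWithin_eq_zero hf _ hx hy
  intro z hz
  have hfz : DifferentiableAt ℂ f z := hf.differentiableAt (hopen.mem_nhds hz)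
  have hgz : DifferentiableAt ℂ (fun w => (starRingEnd ℂ) (f w)) z :=
    hg.differentiableAt (hopen.mem_nhds hz)
  have hder : deriv f z = 0 := deriv_eq_zero_of_conj_diff hfz hgz
  have : HasFDerivAt f (ContinuousLinearMap.smulRight (1 : ℂ →L[ℂ] ℂ) (0:ℂ)) z := by
    have := hfz.hasDerivAt
    rw [hder] at this
    exact this.hasFDerivAt
  rw [fderivWithin_eq_fderiv (hopen.uniqueDiffOn z hz) hfz, this.fderiv]
  refine ContinuousLinearMap.ext fun w => ?_
  simp

/-- If `T : 𝔻 → B(ℂⁿ)` is such that for every `ℂⁿ`-valued Bergman-space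
function `f` both `z ↦ T(z)(f(z))` and `z ↦ T(z)*(f(z))` are holomorphic on the disc,
then `T` is constant on the disc. -/
theorem stmt2 (n : ℕ) (hn : 1 ≤ n)
    (T : ℂ → (EuclideanSpace ℂ (Fin n) →L[ℂ] EuclideanSpace ℂ (Fin n)))
    (hT : ∀ f : ℂ → EuclideanSpace ℂ (Fin n),
      DifferentiableOn ℂ f (ball (0 : ℂ) 1) →
      (∫⁻ z in ball (0 : ℂ) 1, (‖f z‖₊ : ℝ≥0∞) ^ 2) < ⊤ →
      DifferentiableOn ℂ (fun z => T z (f z)) (ball (0 : ℂ) 1))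
    (hTadj : ∀ f : ℂ → EuclideanSpace ℂ (Fin n),
      DifferentiableOn ℂ f (ball (0 : ℂ) 1) →
      (∫⁻ z in ball (0 : ℂ) 1, (‖f z‖₊ : ℝ≥0∞) ^ 2) < ⊤ →
      DifferentiableOn ℂ (fun z => ContinuousLinearMap.adjoint (T z) (f z)) (ball (0 : ℂ) 1)) :
    ∃ A : EuclideanSpace ℂ (Fin n) →L[ℂ] EuclideanSpace ℂ (Fin n),
      ∀ lam ∈ ball (0 : ℂ) 1, T lam = A := by
  refine ⟨T 0, fun lam hlam => ?_⟩
  have h0 : (0:ℂ) ∈ ball (0:ℂ) 1 := by simp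
  have hfin : ∀ v : EuclideanSpace ℂ (Fin n),
      (∫⁻ z in ball (0:ℂ) 1, (‖(fun _ : ℂ => v) z‖₊ : ℝ≥0∞) ^ 2) < ⊤ := by
    intro v
    rw [setLIntegral_const]
    exact ENNReal.mul_lt_top (by simp [ENNReal.pow_lt_top, ENNReal.coe_lt_top]) measure_ball_lt_top
  have key : ∀ (v w : EuclideanSpace ℂ (Fin n)),
      (inner ℂ w (T lam v) : ℂ) = inner ℂ w (T 0 v) := by
    intro v w
    have hTv : DifferentiableOn ℂ (fun z => T z v) (ball (0:ℂ) 1) :=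
      hT (fun _ => v) (differentiableOn_const v) (hfin v)
    have hTw : DifferentiableOn ℂ (fun z => (ContinuousLinearMap.adjoint (T z)) w)
        (ball (0:ℂ) 1) :=
      hTadj (fun _ => w) (differentiableOn_const w) (hfin w)
    have ha : DifferentiableOn ℂ (fun z => (inner ℂ w (T z v) : ℂ)) (ball (0:ℂ) 1) :=
      (innerSL ℂ w).differentiable.comp_differentiableOn hTv
    have hb : DifferentiableOn ℂ (fun z => (starRingEnd ℂ) (inner ℂ w (T z v) : ℂ))
        (ball (0:ℂ) 1) := by
      have heq : (fun z => (starRingEnd ℂ) (inner ℂ w (T z v) : ℂ))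
           = fun z => (inner ℂ v ((ContinuousLinearMap.adjoint (T z)) w) : ℂ) := by
        funext z
        rw [ContinuousLinearMap.adjoint_inner_right]
        exact inner_conj_symm _ _
      rw [heq]
      exact (innerSL ℂ v).differentiable.comp_differentiableOn hTw
    exact const_of_conj_diff ha hb hlam h0
  refine ContinuousLinearMap.ext fun v => ?_
  exact ext_inner_left ℂ (fun w => key v w)
end

section
/- Let B be a finite Blaschke product of order n and let U be a nonempty open connected subset of 𝔻. Let σ and τ be holomorphic functions on U with σ(U) ⊆ 𝔻 and τ(U) ⊆ 𝔻 satisfying B(σ(z)) = z and B(τ(z)) = z for every z ∈ U (i.e. σ and τ are holomorphic inverses of B on U). If σ ≠ τ, then their images are disjoint: σ(U) ∩ τ(U) = ∅. -/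
open Metric

/-- A finite Blaschke product of order `n`: on the unit disc, `B` is given by
`B(z) = e^{iθ} ∏_{k=1}^{n} (z - a_k)/(1 - conj(a_k) z)` with `a_1, …, a_n ∈ 𝔻`. -/
def IsBlaschke (n : ℕ) (B : ℂ → ℂ) : Prop :=
  ∃ (θ : ℝ) (a : Fin n → ℂ), (∀ k, a k ∈ Metric.ball (0 : ℂ) 1) ∧
    ∀ z ∈ Metric.ball (0 : ℂ) 1,
      B z = Complex.exp (θ * Complex.I) *
        ∏ k, (z - a k) / (1 - (starRingEnd ℂ) (a k) * z)

/-- A Blaschke product is differentiable on the unit ball. -/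
lemma isBlaschke_differentiableOn {n : ℕ} {B : ℂ → ℂ} (hB : IsBlaschke n B) :
    DifferentiableOn ℂ B (ball (0 : ℂ) 1) := by
  obtain ⟨θ, a, ha, hBeq⟩ := hB
  have key : DifferentiableOn ℂ
      (fun z => Complex.exp (θ * Complex.I) *
        ∏ k, (z - a k) / (1 - (starRingEnd ℂ) (a k) * z)) (ball (0 : ℂ) 1) := by
    apply DifferentiableOn.const_mul
    apply DifferentiableOn.fun_finsetProd
    intro k _
    apply DifferentiableOn.div
    · exact (differentiable_id.sub_const _).differentiableOn
    · exact ((differentiable_const _).sub ((differentiable_const _).mul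
        differentiable_id)).differentiableOn
    · intro z hz
      simp only [mem_ball, dist_zero_right] at hz
      have hk := ha k
      simp only [mem_ball, dist_zero_right] at hk
      intro h
      have : ‖(starRingEnd ℂ) (a k) * z‖ < 1 := by
        rw [norm_mul, RCLike.norm_conj]
        calc ‖a k‖ * ‖z‖ ≤ ‖a k‖ * 1 := by
              exact mul_le_mul_of_nonneg_left hz.le (norm_nonneg _)
          _ = ‖a k‖ := mul_one _
          _ < 1 := hk
      have h1 : (starRingEnd ℂ) (a k) * z = 1 := by linear_combination -h
      rw [h1] at this
      simp at this
  exact key.congr hBeq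

/-- Two distinct holomorphic inverses `σ, τ` of a finite Blaschke product `B`
on a nonempty open connected set `U ⊆ 𝔻` have disjoint images. -/
theorem stmt4 (n : ℕ) (B : ℂ → ℂ) (hB : IsBlaschke n B)
    (U : Set ℂ) (hUsub : U ⊆ ball (0 : ℂ) 1) (hUo : IsOpen U) (hUc : IsConnected U)
    (σ τ : ℂ → ℂ)
    (hσd : DifferentiableOn ℂ σ U) (hσm : Set.MapsTo σ U (ball (0 : ℂ) 1))
    (hσinv : ∀ z ∈ U, B (σ z) = z)
    (hτd : DifferentiableOn ℂ τ U) (hτm : Set.MapsTo τ U (ball (0 : ℂ) 1))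
    (hτinv : ∀ z ∈ U, B (τ z) = z)
    (hne : ¬ Set.EqOn σ τ U) :
    σ '' U ∩ τ '' U = ∅ := by
  by_contra h
  rw [← Set.not_nonempty_iff_eq_empty, not_not] at h
  obtain ⟨w, ⟨z₁, hz₁, hw₁⟩, ⟨z₂, hz₂, hw₂⟩⟩ := h
  -- z₁ = z₂ since B is a left inverse
  have hz12 : z₁ = z₂ := by
    rw [← hσinv z₁ hz₁, ← hτinv z₂ hz₂, hw₁, hw₂]
  subst hz12
  have hστ : σ z₁ = τ z₁ := by rw [hw₁, hw₂]
  set w₀ := σ z₁ with hw₀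
  have hw₀mem : w₀ ∈ ball (0 : ℂ) 1 := hσm hz₁
  -- B is analytic at w₀
  have hBdiff : DifferentiableOn ℂ B (ball (0 : ℂ) 1) := isBlaschke_differentiableOn hB
  have hBan : AnalyticAt ℂ B w₀ :=
    (hBdiff.analyticAt (isOpen_ball.mem_nhds hw₀mem))
  obtain ⟨p, hp⟩ := hBan
  have hstrict : HasStrictDerivAt B (p 1 fun _ => 1) w₀ := hp.hasStrictDerivAt
  -- derivative of B at w₀ is nonzero, via chain rule on B ∘ σ = id
  have hσat : DifferentiableAt ℂ σ z₁ := hσd.differentiableAt (hUo.mem_nhds hz₁)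
  have hcomp : HasDerivAt (B ∘ σ) ((p 1 fun _ => 1) * deriv σ z₁) z₁ :=
    (hstrict.hasDerivAt.comp z₁ hσat.hasDerivAt)
  have hid : HasDerivAt (B ∘ σ) 1 z₁ := by
    have : (B ∘ σ) =ᶠ[nhds z₁] id := by
      filter_upwards [hUo.mem_nhds hz₁] with z hz using hσinv z hz
    exact (hasDerivAt_id z₁).congr_of_eventuallyEq this
  have hd1 : (p 1 fun _ => 1) * deriv σ z₁ = 1 := hcomp.unique hid
  have hd : (p 1 fun _ => 1) ≠ 0 := left_ne_zero_of_mul_eq_one hd1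
  -- local inverse of B near w₀
  set g := hstrict.localInverse B _ _ hd with hg
  have hleft : ∀ᶠ x in nhds w₀, g (B x) = x :=
    (hstrict.hasStrictFDerivAt_equiv hd).eventually_left_inverse
  obtain ⟨s, hs_nhds, hs⟩ := hleft.exists_mem
  -- σ and τ agree near z₁
  have hσc : ContinuousAt σ z₁ := hσat.continuousAt
  have hτc : ContinuousAt τ z₁ := (hτd.differentiableAt (hUo.mem_nhds hz₁)).continuousAt
  have hτw₀ : nhds (τ z₁) = nhds w₀ := by rw [hστ]
  have heq : σ =ᶠ[nhds z₁] τ := by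
    filter_upwards [hσc.preimage_mem_nhds hs_nhds,
      hτc.preimage_mem_nhds (hτw₀ ▸ hs_nhds), hUo.mem_nhds hz₁] with z h1 h2 h3
    have e1 : g (B (σ z)) = σ z := hs _ h1
    have e2 : g (B (τ z)) = τ z := hs _ h2
    rw [hσinv z h3] at e1
    rw [hτinv z h3] at e2
    rw [← e1, ← e2]
  -- identity theorem
  have hσan : AnalyticOnNhd ℂ σ U := hσd.analyticOnNhd hUo
  have hτan : AnalyticOnNhd ℂ τ U := hτd.analyticOnNhd hUo
  exact hne (hσan.eqOn_of_preconnected_of_eventuallyEq hτan hUc.isPreconnected hz₁ heq)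
end

section
/- Let B be a finite Blaschke product of order n ≥ 1. For every w ∈ 𝔻, the set {z ∈ 𝔻 : B(z) = w} is finite and nonempty, and the zeros of z ↦ B(z) − w in 𝔻 counted with multiplicity number exactly n; that is, ∑_{z ∈ 𝔻, B(z) = w} ord_z(B − w) = n, where ord_z(B − w) denotes the order of vanishing of B(·) − w at z. -/
open Metric

/-- The order of vanishing of `f` at `z`: the least `m` such that the `m`-th
complex derivative of `f` at `z` is nonzero (`0` if `f z ≠ 0`). -/
noncomputable def vanishOrder (f : ℂ → ℂ) (z : ℂ) : ℕ :=
  sInf {m : ℕ | iteratedDeriv m f z ≠ 0}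

open Polynomial in
lemma natDegree_one_sub_C_mul_X_le (c : ℂ) :
    (1 - Polynomial.C c * Polynomial.X : Polynomial ℂ).natDegree ≤ 1 := by
  compute_degree

open Polynomial in
lemma analyticAt_eval (p : ℂ[X]) (z : ℂ) : AnalyticAt ℂ (fun x => p.eval x) z := by
  have h := AnalyticAt.aeval_polynomial (analyticAt_id : AnalyticAt ℂ (id : ℂ → ℂ) z) p
  simpa [Polynomial.coe_aeval_eq_eval] using h

lemma iteratedDeriv_eq_coeff {f : ℂ → ℂ} {p : FormalMultilinearSeries ℂ ℂ ℂ} {z₀ : ℂ}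
    (hp : HasFPowerSeriesAt f p z₀) (k : ℕ) :
    iteratedDeriv k f z₀ = (Nat.factorial k : ℂ) * p.coeff k := by
  obtain ⟨r, hr⟩ := hp
  have h := hr.factorial_smul (1 : ℂ) k
  rw [iteratedDeriv]
  rw [← h, FormalMultilinearSeries.coeff]
  simp [Nat.smul_one_eq_cast]

lemma vanishOrder_eq_of_factor {f g : ℂ → ℂ} {z₀ : ℂ} {m : ℕ}
    (hg : AnalyticAt ℂ g z₀) (hg0 : g z₀ ≠ 0)
    (hf : ∀ᶠ ζ in nhds z₀, f ζ = (ζ - z₀) ^ m * g ζ) :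
    vanishOrder f z₀ = m := by
  obtain ⟨p, hp⟩ := hg
  set c : ℕ → ℂ := fun k => if k < m then 0 else p.coeff (k - m) with hc
  set q := FormalMultilinearSeries.ofScalars ℂ c with hq
  have hqc : ∀ k, q.coeff k = c k := by
    intro k
    simp [hq, FormalMultilinearSeries.coeff, FormalMultilinearSeries.ofScalars, Pi.one_def]
  have htend : Filter.Tendsto (fun z : ℂ => z₀ + z) (nhds 0) (nhds z₀) := by
    simpa using (continuous_add_left z₀).tendsto (0 : ℂ)
  have hfq : HasFPowerSeriesAt f q z₀ := by
    rw [hasFPowerSeriesAt_iff]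
    have hps := hasFPowerSeriesAt_iff.mp hp
    have hmem : ∀ᶠ z in nhds (0 : ℂ), f (z₀ + z) = z ^ m * g (z₀ + z) := by
      filter_upwards [htend.eventually hf] with z hz
      simpa using hz
    filter_upwards [hps, hmem] with z hz1 hz2
    simp only [hqc]
    rw [hz2]
    have h3 : HasSum (fun k => z ^ (k + m) • p.coeff k) (z ^ m * g (z₀ + z)) := by
      have := hz1.mul_left (z ^ m)
      convert this using 2 with k
      · rfl
      rw [pow_add, smul_eq_mul, smul_eq_mul]
      ring
    have h4 : HasSum (fun k => z ^ (k + m) • c (k + m)) (z ^ m * g (z₀ + z)) := by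
      convert h3 using 2 with k
      simp [hc, Nat.not_lt.mpr (Nat.le_add_left m k)]
    have h5 := (hasSum_nat_add_iff (f := fun k => z ^ k • c k) m).mp (by simpa using h4)
    have h6 : ∑ i ∈ Finset.range m, z ^ i • c i = 0 := by
      apply Finset.sum_eq_zero
      intro i hi
      simp [hc, Finset.mem_range.mp hi]
    rwa [h6, add_zero] at h5
  have hiter : ∀ k, iteratedDeriv k f z₀ = (Nat.factorial k : ℂ) * c k := by
    intro k
    rw [iteratedDeriv_eq_coeff hfq, hqc]
  have hcm : c m ≠ 0 := by
    have h0 : p.coeff 0 = g z₀ := hp.coeff_zero 1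
    simp [hc, h0, hg0]
  unfold vanishOrder
  apply le_antisymm
  · apply Nat.sInf_le
    simp only [Set.mem_setOf_eq, hiter]
    exact mul_ne_zero (Nat.cast_ne_zero.mpr (Nat.factorial_ne_zero m)) hcm
  · refine le_csInf ⟨m, ?_⟩ fun k hk => ?_
    · simp only [Set.mem_setOf_eq, hiter]
      exact mul_ne_zero (Nat.cast_ne_zero.mpr (Nat.factorial_ne_zero m)) hcm
    · by_contra hlt
      push_neg at hlt
      apply hk
      simp only [Set.mem_setOf_eq, hiter, not_not]
      simp [hc, hlt]

open Polynomial

/-- For a Blaschke product `B` of order `n ≥ 1` and any `w ∈ 𝔻`, the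
fiber `{z ∈ 𝔻 : B(z) = w}` is finite and nonempty, and the zeros of `B(·) - w` in `𝔻`
counted with multiplicity number exactly `n`. -/
theorem stmt7 (n : ℕ) (hn : 1 ≤ n) (B : ℂ → ℂ) (hB : IsBlaschke n B)
    (w : ℂ) (hw : w ∈ ball (0 : ℂ) 1) :
    ∃ F : Finset ℂ, (↑F : Set ℂ) = {z ∈ ball (0 : ℂ) 1 | B z = w} ∧ F.Nonempty ∧
      ∑ z ∈ F, vanishOrder (fun ζ => B ζ - w) z = n := by
  classical
  obtain ⟨θ, a, ha, hBeq⟩ := hB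
  have hw1 : ‖w‖ < 1 := mem_ball_zero_iff.mp hw
  have ha1 : ∀ k, ‖a k‖ < 1 := fun k => mem_ball_zero_iff.mp (ha k)
  set e := Complex.exp (θ * Complex.I) with he
  have he1 : ‖e‖ = 1 := by
    rw [he, Complex.norm_exp]
    simp
  set Q : ℂ[X] := ∏ k : Fin n, (1 - C ((starRingEnd ℂ) (a k)) * X) with hQdef
  set P : ℂ[X] := C e * ∏ k : Fin n, (X - C (a k)) - C w * Q with hPdef
  have hQeval : ∀ z : ℂ, Q.eval z = ∏ k, (1 - (starRingEnd ℂ) (a k) * z) := by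
    intro z; simp [hQdef, eval_prod]
  have hQne : ∀ z ∈ ball (0 : ℂ) 1, Q.eval z ≠ 0 := by
    intro z hz
    rw [hQeval]
    rw [Finset.prod_ne_zero_iff]
    intro k _ h0
    have h1 : (starRingEnd ℂ) (a k) * z = 1 := by
      have := sub_eq_zero.mp h0; exact this.symm
    have h2 : ‖(starRingEnd ℂ) (a k) * z‖ < 1 := by
      rw [norm_mul, RCLike.norm_conj]
      have hz1 : ‖z‖ < 1 := mem_ball_zero_iff.mp hz
      nlinarith [norm_nonneg (a k), norm_nonneg z, ha1 k]
    rw [h1] at h2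
    simp at h2
  have hPeval : ∀ z : ℂ, P.eval z = e * ∏ k, (z - a k) - w * Q.eval z := by
    intro z; simp [hPdef, eval_prod]
  have hfrac : ∀ z ∈ ball (0 : ℂ) 1, B z - w = P.eval z / Q.eval z := by
    intro z hz
    have hD : Q.eval z ≠ 0 := hQne z hz
    rw [hBeq z hz, hPeval, hQeval]
    rw [hQeval] at hD
    rw [Finset.prod_div_distrib]
    rw [sub_div, mul_div_assoc, mul_div_cancel_right₀ w hD]
  -- coefficient n of P
  have hmon : (∏ k : Fin n, (X - C (a k)) : ℂ[X]).Monic :=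
    monic_prod_of_monic _ _ fun k _ => monic_X_sub_C (a k)
  have hdegprod : (∏ k : Fin n, (X - C (a k)) : ℂ[X]).natDegree = n := by
    rw [natDegree_prod]
    · simp
    · intro k _; exact X_sub_C_ne_zero (a k)
  have hQdeg : Q.natDegree ≤ n := by
    refine le_trans (natDegree_prod_le _ _) ?_
    calc ∑ k : Fin n, (1 - C ((starRingEnd ℂ) (a k)) * X).natDegree
        ≤ ∑ _k : Fin n, 1 := by
          apply Finset.sum_le_sum
          intro k _
          exact natDegree_one_sub_C_mul_X_le _
      _ = n := by simp
  have hQcoeff : Q.coeff n = ∏ k, (-(starRingEnd ℂ) (a k)) := by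
    have h := coeff_prod_of_natDegree_le (s := (Finset.univ : Finset (Fin n)))
      (f := fun k => (1 - C ((starRingEnd ℂ) (a k)) * X : ℂ[X])) 1 ?_
    · rw [← hQdef] at h
      simpa [coeff_one] using h
    · intro k _
      exact natDegree_one_sub_C_mul_X_le _
  have hPcoeffn : P.coeff n = e - w * ∏ k, (-(starRingEnd ℂ) (a k)) := by
    rw [hPdef]
    rw [coeff_sub, coeff_C_mul, coeff_C_mul, hQcoeff]
    have hcn : (∏ k : Fin n, (X - C (a k)) : ℂ[X]).coeff n = 1 := by
      have h2 := hmon.coeff_natDegree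
      rwa [hdegprod] at h2
    rw [hcn]
    ring
  have hne : P.coeff n ≠ 0 := by
    rw [hPcoeffn]
    intro h0
    have heqw : e = w * ∏ k, (-(starRingEnd ℂ) (a k)) := sub_eq_zero.mp h0
    have hprodle : ‖∏ k, (-(starRingEnd ℂ) (a k))‖ ≤ 1 := by
      rw [norm_prod]
      apply Finset.prod_le_one
      · intro k _; exact norm_nonneg _
      · intro k _; rw [norm_neg, RCLike.norm_conj]; exact le_of_lt (ha1 k)
    have := congrArg norm heqw
    rw [he1, norm_mul] at this
    nlinarith [norm_nonneg w, norm_nonneg (∏ k, (-(starRingEnd ℂ) (a k)))]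
  have hPdegle : P.natDegree ≤ n := by
    rw [hPdef]
    refine le_trans (natDegree_sub_le _ _) ?_
    apply max_le
    · exact le_trans (natDegree_C_mul_le _ _) (le_of_eq hdegprod)
    · exact le_trans (natDegree_C_mul_le _ _) hQdeg
  have hPne : P ≠ 0 := fun h => hne (by simp [h])
  have hPdeg : P.natDegree = n := le_antisymm hPdegle (le_natDegree_of_ne_zero hne)
  -- all roots lie in the ball
  have hkey : ∀ z : ℂ, 1 ≤ ‖z‖ → ∀ k : Fin n,
      ‖1 - (starRingEnd ℂ) (a k) * z‖ ≤ ‖z - a k‖ := by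
    intro z hz k
    have hid : Complex.normSq (z - a k) - Complex.normSq (1 - (starRingEnd ℂ) (a k) * z)
        = (Complex.normSq z - 1) * (1 - Complex.normSq (a k)) := by
      simp [Complex.normSq_apply, Complex.sub_re, Complex.sub_im, Complex.mul_re,
        Complex.mul_im, Complex.one_re, Complex.one_im]
      ring
    have h1 : 1 ≤ Complex.normSq z := by
      rw [Complex.normSq_eq_norm_sq]
      nlinarith
    have h2 : Complex.normSq (a k) ≤ 1 := by
      rw [Complex.normSq_eq_norm_sq]
      nlinarith [norm_nonneg (a k), ha1 k]
    have h3 : Complex.normSq (1 - (starRingEnd ℂ) (a k) * z) ≤ Complex.normSq (z - a k) := by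
      nlinarith
    rw [Complex.normSq_eq_norm_sq, Complex.normSq_eq_norm_sq] at h3
    nlinarith [norm_nonneg (1 - (starRingEnd ℂ) (a k) * z), norm_nonneg (z - a k)]
  have hroots_ball : ∀ z ∈ P.roots, z ∈ ball (0 : ℂ) 1 := by
    intro z hz
    by_contra hzb
    have hz1 : 1 ≤ ‖z‖ := by
      rw [mem_ball_zero_iff] at hzb
      exact not_lt.mp hzb
    have hPz : P.eval z = 0 := (mem_roots hPne).mp hz
    rw [hPeval, hQeval] at hPz
    have heq : e * ∏ k, (z - a k) = w * ∏ k, (1 - (starRingEnd ℂ) (a k) * z) :=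
      sub_eq_zero.mp hPz
    have hnorm := congrArg norm heq
    rw [norm_mul, norm_mul, norm_prod, norm_prod, he1, one_mul] at hnorm
    have hL : 0 < ∏ k, ‖z - a k‖ := by
      apply Finset.prod_pos
      intro k _
      rw [norm_pos_iff, sub_ne_zero]
      intro hza
      rw [hza] at hz1
      exact absurd (ha1 k) (not_lt.mpr hz1)
    have hR : ∏ k, ‖1 - (starRingEnd ℂ) (a k) * z‖ ≤ ∏ k, ‖z - a k‖ := by
      apply Finset.prod_le_prod
      · intro k _; exact norm_nonneg _
      · intro k _; exact hkey z hz1 k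
    nlinarith [norm_nonneg w,
      mul_le_mul_of_nonneg_left hR (norm_nonneg w)]
  -- membership characterization
  have hmem : ∀ z : ℂ, z ∈ P.roots ↔ z ∈ ball (0 : ℂ) 1 ∧ B z = w := by
    intro z
    constructor
    · intro hz
      have hball := hroots_ball z hz
      refine ⟨hball, ?_⟩
      have hPz : P.eval z = 0 := (mem_roots hPne).mp hz
      have := hfrac z hball
      rw [hPz, zero_div] at this
      exact sub_eq_zero.mp this
    · rintro ⟨hball, hBz⟩
      rw [mem_roots hPne]
      have h0 : B z - w = 0 := by rw [hBz]; ring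
      rw [hfrac z hball] at h0
      rcases div_eq_zero_iff.mp h0 with h | h
      · exact h
      · exact absurd h (hQne z hball)
  have hcard : Multiset.card P.roots = n := by
    rw [← hPdeg]
    exact IsAlgClosed.card_roots_eq_natDegree
  refine ⟨P.roots.toFinset, ?_, ?_, ?_⟩
  · ext z
    simp only [Finset.coe_sort_coe, Multiset.mem_toFinset, Finset.mem_coe, Set.mem_setOf_eq]
    rw [hmem z]
  · rw [Multiset.toFinset_nonempty]
    intro h0
    rw [h0] at hcard
    simp at hcard
    omega
  · have hpt : ∀ z ∈ P.roots.toFinset,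
        vanishOrder (fun ζ => B ζ - w) z = rootMultiplicity z P := by
      intro z hz
      have hzr : z ∈ P.roots := Multiset.mem_toFinset.mp hz
      have hball : z ∈ ball (0 : ℂ) 1 := hroots_ball z hzr
      set m := rootMultiplicity z P with hm
      set R := P /ₘ (X - C z) ^ m with hR
      have hfact : (X - C z) ^ m * R = P := pow_mul_divByMonic_rootMultiplicity_eq P z
      have hR0 : R.eval z ≠ 0 := eval_divByMonic_pow_rootMultiplicity_ne_zero z hPne
      set g : ℂ → ℂ := fun ζ => R.eval ζ / Q.eval ζ with hg
      have hganal : AnalyticAt ℂ g z :=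
        (analyticAt_eval R z).div (analyticAt_eval Q z) (hQne z hball)
      have hg0 : g z ≠ 0 := div_ne_zero hR0 (hQne z hball)
      apply vanishOrder_eq_of_factor hganal hg0
      filter_upwards [isOpen_ball.mem_nhds hball] with ζ hζ
      rw [hfrac ζ hζ, ← hfact]
      rw [eval_mul, eval_pow, eval_sub, eval_X, eval_C]
      rw [hg]
      rw [mul_div_assoc]
    rw [Finset.sum_congr rfl hpt]
    have : ∀ z ∈ P.roots.toFinset, rootMultiplicity z P = P.roots.count z := by
      intro z _; rw [count_roots]
    rw [Finset.sum_congr rfl this]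
    rw [Multiset.toFinset_sum_count_eq]
    exact hcard
end

section
/- Let B be a finite Blaschke product of order n ≥ 1 and let 𝒮 = B({β ∈ 𝔻 : B′(β) = 0}) be its set of critical values in 𝔻. Set X = {z ∈ 𝔻 : B(z) ∉ 𝒮} and Y = 𝔻 ∖ 𝒮. Then the restriction of B, regarded as a map from X onto Y, is a covering map (an n-sheeted covering). -/
open Metric

/-- The set `𝒮 = B({β ∈ 𝔻 : B′(β) = 0})` of critical values of `B` in the disc. -/
def critValues (B : ℂ → ℂ) : Set ℂ :=
  B '' {β ∈ Metric.ball (0 : ℂ) 1 | deriv B β = 0}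

section AuxAll
open Set Polynomial Topology

open Metric Set Topology

variable {α β : Type*} [TopologicalSpace α] [TopologicalSpace β]

theorem isCoveringMap_restrict_of_localData
    {f : α → β} {Xs : Set α} {Ys : Set β} (hmaps : Set.MapsTo f Xs Ys)
    (key : ∀ y : β, y ∈ Ys → ∃ (n : ℕ) (_ : 0 < n) (V : Set β) (_ : IsOpen V) (_ : y ∈ V)
      (e : Fin n → OpenPartialHomeomorph α β),
      (∀ i, Set.EqOn f (e i) ((e i).source)) ∧
      (∀ i, (e i).target = V) ∧
      (∀ i, ∀ x ∈ (e i).source, (x ∈ Xs ↔ f x ∈ Ys)) ∧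
      (∀ i j, i ≠ j → Disjoint ((e i).source) ((e j).source)) ∧
      ({x | x ∈ Xs ∧ f x ∈ V} ⊆ ⋃ i, (e i).source)) :
    IsCoveringMap (hmaps.restrict f Xs Ys) := by
  classical
  intro y
  obtain ⟨n, hn, V, hVopen, hyV, e, heq, htgt, hXY, hdisj, hcover⟩ := key y.1 y.2
  set F := hmaps.restrict f Xs Ys with hF
  have hFval : ∀ x : Xs, (F x : β) = f x.1 := fun x => rfl
  -- basic facts
  have hsrcV : ∀ i, ∀ x ∈ (e i).source, f x ∈ V := fun i x hx => by
    rw [heq i hx, ← htgt i]; exact (e i).map_source hx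
  have hsymm_mem : ∀ (i : Fin n) {v : β}, v ∈ V → (e i).symm v ∈ (e i).source := fun i v hv =>
    (e i).map_target (by rw [htgt i]; exact hv)
  have hf_symm : ∀ (i : Fin n) {v : β}, v ∈ V → f ((e i).symm v) = v := fun i v hv => by
    rw [heq i (hsymm_mem i hv)]; exact (e i).right_inv (by rw [htgt i]; exact hv)
  have hsymmXs : ∀ (i : Fin n) {v : β}, v ∈ V → v ∈ Ys → (e i).symm v ∈ Xs := fun i v hv hvY =>
    (hXY i _ (hsymm_mem i hv)).2 (by rw [hf_symm i hv]; exact hvY)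
  have i0 : Fin n := ⟨0, hn⟩
  haveI : Nonempty Xs := ⟨⟨(e i0).symm y.1, hsymmXs i0 hyV y.2⟩⟩
  -- the index function
  have huniq : ∀ {i j : Fin n} {x : α}, x ∈ (e i).source → x ∈ (e j).source → i = j := by
    intro i j x hi hj
    by_contra hij
    exact (hdisj i j hij).le_bot ⟨hi, hj⟩ |>.elim
  let idx : α → Fin n := fun x => if h : ∃ i, x ∈ (e i).source then h.choose else i0
  have hidx : ∀ (i : Fin n) (x : α), x ∈ (e i).source → idx x = i := by
    intro i x hx
    have h : ∃ i, x ∈ (e i).source := ⟨i, hx⟩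
    simp only [idx, dif_pos h]
    exact huniq h.choose_spec hx
  -- source of trivialization
  have hsource_eq : {x : Xs | f x.1 ∈ V} = (Subtype.val) ⁻¹' (⋃ i, (e i).source) := by
    ext x
    simp only [mem_setOf_eq, mem_preimage, mem_iUnion]
    constructor
    · intro hx
      have := hcover ⟨x.2, hx⟩
      simpa using this
    · rintro ⟨i, hi⟩
      exact hsrcV i _ hi
  have hsource_open : IsOpen {x : Xs | f x.1 ∈ V} := by
    rw [hsource_eq]
    exact (isOpen_iUnion fun i => (e i).open_source).preimage continuous_subtype_val
  -- raw inverse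
  let invRaw : Ys × Fin n → α := fun p => if (p.1 : β) ∈ V then (e p.2).symm p.1 else
    (Classical.arbitrary Xs).1
  have hinvRaw_mem : ∀ p : Ys × Fin n, invRaw p ∈ Xs := by
    intro p
    by_cases h : (p.1 : β) ∈ V
    · simp only [invRaw, if_pos h]
      exact hsymmXs p.2 h p.1.2
    · simp only [invRaw, if_neg h]
      exact (Classical.arbitrary Xs).2
  -- continuity of the forward map
  have hcont_to : ContinuousOn (fun x : Xs => ((F x : Ys), idx x.1)) {x : Xs | f x.1 ∈ V} := by
    intro x hx
    have hx' : ∃ i, x.1 ∈ (e i).source := by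
      have := hcover ⟨x.2, hx⟩
      simpa using this
    obtain ⟨i, hi⟩ := hx'
    apply ContinuousAt.continuousWithinAt
    have hnbhd : (Subtype.val) ⁻¹' (e i).source ∈ 𝓝 x :=
      ((e i).open_source.preimage continuous_subtype_val).mem_nhds hi
    have h1 : ContinuousAt (fun x' : Xs => f x'.1) x := by
      have hEi : ContinuousAt (e i) x.1 := (e i).continuousAt hi
      have hfe : ContinuousAt (f ∘ (Subtype.val : Xs → α)) x := by
        apply ContinuousAt.congr (hEi.comp continuousAt_subtype_val)
        filter_upwards [hnbhd] with x' hx'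
        exact (heq i hx').symm
      exact hfe
    have h1' : ContinuousAt (fun x' : Xs => (F x' : Ys)) x := by
      rw [Topology.IsInducing.subtypeVal.continuousAt_iff]
      exact h1
    have h2 : ContinuousAt (fun x' : Xs => idx x'.1) x := by
      apply ContinuousAt.congr continuousAt_const
      filter_upwards [hnbhd] with x' hx'
      exact (hidx i _ hx').symm
    exact h1'.prodMk h2
  -- continuity of the inverse map
  have hcont_inv : ContinuousOn invRaw (((Subtype.val) ⁻¹' V) ×ˢ (univ : Set (Fin n))) := by
    rintro ⟨v, i⟩ ⟨hv, -⟩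
    simp only [mem_preimage] at hv
    have hslice : (Prod.snd ⁻¹' {i} : Set (Ys × Fin n)) ∈ 𝓝 (v, i) :=
      ((isOpen_discrete {i}).preimage continuous_snd).mem_nhds rfl
    have hgI : ContinuousWithinAt (fun p' : Ys × Fin n => (e i).symm p'.1.1)
        (((Subtype.val) ⁻¹' V) ×ˢ (univ : Set (Fin n))) (v, i) := by
      have hsymm : ContinuousWithinAt (e i).symm V v.1 := by
        have := (e i).continuousOn_symm v.1 (by rw [htgt i]; exact hv)
        rwa [htgt i] at this
      have hfst : ContinuousWithinAt (fun p' : Ys × Fin n => (p'.1 : β))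
          (((Subtype.val) ⁻¹' V) ×ˢ (univ : Set (Fin n))) (v, i) :=
        (continuous_subtype_val.comp continuous_fst).continuousWithinAt
      exact ContinuousWithinAt.comp (g := (e i).symm)
        (f := fun p' : Ys × Fin n => (p'.1 : β)) (x := (v, i)) (t := V)
        hsymm hfst (fun p' hp' => hp'.1)
    apply ContinuousWithinAt.congr_of_eventuallyEq hgI ?_ (if_pos hv)
    filter_upwards [mem_nhdsWithin_of_mem_nhds hslice, self_mem_nhdsWithin] with p' h2 h1
    have : p'.2 = i := h2
    simp only [invRaw, if_pos (show (p'.1 : β) ∈ V from h1.1), this]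
  let T : Bundle.Trivialization (Fin n) F :=
    { toFun := fun x => (F x, idx x.1)
      invFun := fun p => ⟨invRaw p, hinvRaw_mem p⟩
      source := {x : Xs | f x.1 ∈ V}
      target := ((Subtype.val) ⁻¹' V) ×ˢ (univ : Set (Fin n))
      map_source' := by
        intro x hx
        exact ⟨hx, mem_univ _⟩
      map_target' := by
        rintro ⟨v, i⟩ ⟨hv, -⟩
        simp only [mem_preimage] at hv
        simp only [mem_setOf_eq, invRaw, if_pos hv]
        rw [hf_symm i hv]
        exact hv
      left_inv' := by
        intro x hx
        have hx' : ∃ i, x.1 ∈ (e i).source := by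
          have := hcover ⟨x.2, hx⟩
          simpa using this
        obtain ⟨i, hi⟩ := hx'
        have hidxx : idx x.1 = i := hidx i _ hi
        ext
        simp only [hidxx, invRaw, hFval, if_pos (show f x.1 ∈ V from hx)]
        have hfe : f x.1 = (e i) x.1 := heq i hi
        rw [hfe]
        exact (e i).left_inv hi
      right_inv' := by
        rintro ⟨v, i⟩ ⟨hv, -⟩
        simp only [mem_preimage] at hv
        have h1 : invRaw (v, i) = (e i).symm v.1 := if_pos hv
        have h2 : f ((e i).symm v.1) = v.1 := hf_symm i hv
        have h3 : (e i).symm v.1 ∈ (e i).source := hsymm_mem i hv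
        refine Prod.ext ?_ ?_
        · apply Subtype.ext
          show f (invRaw (v, i)) = v.1
          rw [h1, h2]
        · show idx (invRaw (v, i)) = i
          rw [h1]
          exact hidx i _ h3
      open_source := hsource_open
      open_target := (hVopen.preimage continuous_subtype_val).prod isOpen_univ
      continuousOn_toFun := hcont_to
      continuousOn_invFun := by
        intro p hp
        have := (hcont_inv p hp)
        rw [Topology.IsInducing.subtypeVal.continuousWithinAt_iff]
        exact this
      baseSet := (Subtype.val) ⁻¹' V
      open_baseSet := hVopen.preimage continuous_subtype_val
      source_eq := by
        ext x
        simp [hFval, F, Set.MapsTo.restrict, Subtype.map]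
      target_eq := rfl
      proj_toFun := fun x _ => rfl }
  exact (IsEvenlyCovered.of_trivialization (t := T) hyV).to_isEvenlyCovered_preimage

noncomputable def PAp (n : ℕ) (a : Fin n → ℂ) : Polynomial ℂ :=
  ∏ k, (Polynomial.X - Polynomial.C (a k))

noncomputable def PCp (n : ℕ) (a : Fin n → ℂ) : Polynomial ℂ :=
  ∏ k, (1 - Polynomial.C ((starRingEnd ℂ) (a k)) * Polynomial.X)

noncomputable def RPp (n : ℕ) (θ : ℝ) (a : Fin n → ℂ) (w : ℂ) : Polynomial ℂ :=
  Polynomial.C (Complex.exp (θ * Complex.I)) * PAp n a - Polynomial.C w * PCp n a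

noncomputable def gBf (n : ℕ) (θ : ℝ) (a : Fin n → ℂ) : ℂ → ℂ :=
  fun z => Polynomial.eval z (Polynomial.C (Complex.exp (θ * Complex.I)) * PAp n a) /
    Polynomial.eval z (PCp n a)

lemma key_id (a z : ℂ) :
    Complex.normSq (1 - (starRingEnd ℂ) a * z) - Complex.normSq (z - a)
      = (1 - Complex.normSq a) * (1 - Complex.normSq z) := by
  simp only [Complex.normSq_apply, Complex.sub_re, Complex.sub_im, Complex.mul_re,
    Complex.mul_im, Complex.one_re, Complex.one_im, Complex.conj_re, Complex.conj_im]
  ring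

lemma normSq_eq_norm_sq (z : ℂ) : Complex.normSq z = ‖z‖ ^ 2 := by
  rw [Complex.normSq_eq_norm_sq]

lemma denom_ne {a z : ℂ} (ha : ‖a‖ < 1) (hz : ‖z‖ < 1) : 1 - (starRingEnd ℂ) a * z ≠ 0 := by
  intro h
  have h1 : (1 : ℂ) = (starRingEnd ℂ) a * z := by linear_combination h
  have : (1:ℝ) = ‖(starRingEnd ℂ) a * z‖ := by rw [← h1, norm_one]
  rw [norm_mul, RCLike.norm_conj] at this
  nlinarith [norm_nonneg a, norm_nonneg z]

lemma factor_lt {a z : ℂ} (ha : ‖a‖ < 1) (hz : ‖z‖ < 1) :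
    ‖z - a‖ < ‖1 - (starRingEnd ℂ) a * z‖ := by
  have h := key_id a z
  rw [normSq_eq_norm_sq, normSq_eq_norm_sq, normSq_eq_norm_sq, normSq_eq_norm_sq] at h
  apply lt_of_pow_lt_pow_left₀ 2 (norm_nonneg _)
  have h1 : (0:ℝ) < 1 - ‖a‖ ^ 2 := by nlinarith [norm_nonneg a]
  have h2 : (0:ℝ) < 1 - ‖z‖ ^ 2 := by nlinarith [norm_nonneg z]
  nlinarith [mul_pos h1 h2]

lemma factor_ge {a z : ℂ} (ha : ‖a‖ < 1) (hz : 1 ≤ ‖z‖) :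
    ‖1 - (starRingEnd ℂ) a * z‖ ≤ ‖z - a‖ := by
  have h := key_id a z
  rw [normSq_eq_norm_sq, normSq_eq_norm_sq, normSq_eq_norm_sq, normSq_eq_norm_sq] at h
  apply le_of_pow_le_pow_left₀ two_ne_zero (norm_nonneg _)
  have h1 : (0:ℝ) < 1 - ‖a‖ ^ 2 := by nlinarith [norm_nonneg a]
  have h2 : (1:ℝ) - ‖z‖ ^ 2 ≤ 0 := by nlinarith [norm_nonneg z]
  nlinarith [mul_nonpos_of_nonneg_of_nonpos h1.le h2]

section params

variable (n : ℕ) (θ : ℝ) (a : Fin n → ℂ)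

lemma eval_PAp (z : ℂ) : Polynomial.eval z (PAp n a) = ∏ k, (z - a k) := by
  simp [PAp, Polynomial.eval_prod]

lemma eval_PCp (z : ℂ) :
    Polynomial.eval z (PCp n a) = ∏ k, (1 - (starRingEnd ℂ) (a k) * z) := by
  simp [PCp, Polynomial.eval_prod]

set_option linter.unusedSectionVars false
variable {n θ a}
variable (ha : ∀ k, ‖a k‖ < 1)
include ha

lemma eval_PCp_ne {z : ℂ} (hz : ‖z‖ < 1) : Polynomial.eval z (PCp n a) ≠ 0 := by
  rw [eval_PCp]
  exact Finset.prod_ne_zero_iff.2 fun k _ => denom_ne (ha k) hz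

lemma gBf_eq {z : ℂ} (hz : ‖z‖ < 1) :
    gBf n θ a z = Complex.exp (θ * Complex.I) *
      ∏ k, (z - a k) / (1 - (starRingEnd ℂ) (a k) * z) := by
  rw [gBf, Polynomial.eval_mul, Polynomial.eval_C, eval_PAp, eval_PCp,
    mul_div_assoc, ← Finset.prod_div_distrib]

lemma norm_gBf (z : ℂ) (hz : ‖z‖ < 1) :
    ‖gBf n θ a z‖ = ∏ k, ‖z - a k‖ / ‖1 - (starRingEnd ℂ) (a k) * z‖ := by
  rw [gBf_eq ha hz, norm_mul, Complex.norm_exp_ofReal_mul_I, one_mul, norm_prod]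
  simp [norm_div]

end params

section params2

set_option linter.unusedSectionVars false
set_option linter.unusedVariables false

variable {n : ℕ} {θ : ℝ} {a : Fin n → ℂ}
variable (ha : ∀ k, ‖a k‖ < 1)
include ha

lemma norm_gBf_lt_one (hn : 1 ≤ n) {z : ℂ} (hz : ‖z‖ < 1) : ‖gBf n θ a z‖ < 1 := by
  rw [norm_gBf ha z hz]
  obtain ⟨m, rfl⟩ : ∃ m, n = m + 1 := ⟨n - 1, by omega⟩
  rw [Fin.prod_univ_succ]
  have h0 : ‖z - a 0‖ / ‖1 - (starRingEnd ℂ) (a 0) * z‖ < 1 := by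
    rw [div_lt_one (norm_pos_iff.2 (denom_ne (ha 0) hz))]
    exact factor_lt (ha 0) hz
  have h1 : ∏ k : Fin m, ‖z - a k.succ‖ / ‖1 - (starRingEnd ℂ) (a k.succ) * z‖ ≤ 1 := by
    apply Finset.prod_le_one
    · intro k _; positivity
    · intro k _
      rw [div_le_one (norm_pos_iff.2 (denom_ne (ha k.succ) hz))]
      exact (factor_lt (ha k.succ) hz).le
  have hp : (0:ℝ) ≤ ∏ k : Fin m, ‖z - a k.succ‖ / ‖1 - (starRingEnd ℂ) (a k.succ) * z‖ :=
    Finset.prod_nonneg fun k _ => by positivity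
  nlinarith [div_nonneg (norm_nonneg (z - a 0)) (norm_nonneg (1 - (starRingEnd ℂ) (a 0) * z))]

end params2

lemma factor_bound {a z : ℂ} (ha : ‖a‖ < 1) (hz : ‖z‖ < 1) :
    1 - ‖z - a‖ / ‖1 - (starRingEnd ℂ) a * z‖ ≤ (1 - ‖z‖) * (4 / (1 - ‖a‖)) := by
  set u := ‖z - a‖ with hu
  set v := ‖1 - (starRingEnd ℂ) a * z‖ with hv'
  have hu0 : 0 ≤ u := norm_nonneg _
  have hA : (0:ℝ) < 1 - ‖a‖ := by linarith
  have hv : 1 - ‖a‖ ≤ v := by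
    have h1 : ‖(1:ℂ)‖ - ‖(starRingEnd ℂ) a * z‖ ≤ v := norm_sub_norm_le _ _
    rw [norm_one, norm_mul, RCLike.norm_conj] at h1
    nlinarith [norm_nonneg a, norm_nonneg z]
  have hv0 : (0:ℝ) < v := lt_of_lt_of_le hA hv
  have hid : v ^ 2 - u ^ 2 = (1 - ‖a‖ ^ 2) * (1 - ‖z‖ ^ 2) := by
    have := key_id a z
    rw [normSq_eq_norm_sq, normSq_eq_norm_sq, normSq_eq_norm_sq, normSq_eq_norm_sq] at this
    exact this
  have huv : u ≤ v := (factor_lt ha hz).le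
  have h4 : (1 - ‖a‖ ^ 2) * (1 - ‖z‖ ^ 2) ≤ 4 * (1 - ‖z‖) * (1 - ‖a‖) := by
    nlinarith [mul_nonneg (mul_nonneg (sub_nonneg.2 ha.le) (sub_nonneg.2 hz.le))
      (show (0:ℝ) ≤ 4 - (1 + ‖a‖) * (1 + ‖z‖) by nlinarith [norm_nonneg a, norm_nonneg z])]
  have h6 : (v - u) * (1 - ‖a‖) ≤ (v - u) * (v + u) :=
    mul_le_mul_of_nonneg_left (by linarith) (sub_nonneg.2 huv)
  have h3 : (v - u) * (1 - ‖a‖) ≤ 4 * (1 - ‖z‖) * v := by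
    have hexp : (v - u) * (v + u) = v ^ 2 - u ^ 2 := by ring
    have hlast := mul_le_mul_of_nonneg_left hv (by nlinarith : (0:ℝ) ≤ 4 * (1 - ‖z‖))
    linarith
  have heq : 1 - u / v = (v - u) / v := by
    rw [sub_div, div_self hv0.ne']
  rw [heq, div_le_iff₀ hv0]
  have hR : (1 - ‖z‖) * (4 / (1 - ‖a‖)) * v * (1 - ‖a‖) = 4 * (1 - ‖z‖) * v := by
    have hinv : (1 - ‖a‖)⁻¹ * (1 - ‖a‖) = 1 := inv_mul_cancel₀ hA.ne'
    calc (1 - ‖z‖) * (4 / (1 - ‖a‖)) * v * (1 - ‖a‖)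
        = 4 * (1 - ‖z‖) * v * ((1 - ‖a‖)⁻¹ * (1 - ‖a‖)) := by rw [div_eq_mul_inv]; ring
      _ = 4 * (1 - ‖z‖) * v := by rw [hinv, mul_one]
  have := h3.trans_eq hR.symm
  exact le_of_mul_le_mul_right this hA

section params3

set_option linter.unusedSectionVars false
set_option linter.unusedVariables false

variable {n : ℕ} {θ : ℝ} {a : Fin n → ℂ}
variable (ha : ∀ k, ‖a k‖ < 1)
include ha

lemma one_sub_norm_gBf_le {z : ℂ} (hz : ‖z‖ < 1) :
    1 - ‖gBf n θ a z‖ ≤ (1 - ‖z‖) * ∑ k, 4 / (1 - ‖a k‖) := by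
  rw [norm_gBf ha z hz]
  have key : ∀ (s : Finset (Fin n)),
      1 - (∏ k ∈ s, ‖z - a k‖ / ‖1 - (starRingEnd ℂ) (a k) * z‖)
        ≤ ∑ k ∈ s, (1 - ‖z - a k‖ / ‖1 - (starRingEnd ℂ) (a k) * z‖) := by
    intro s
    induction s using Finset.induction with
    | empty => simp
    | insert i s' hni ih =>
      rw [Finset.prod_insert hni, Finset.sum_insert hni]
      have hr : ‖z - a i‖ / ‖1 - (starRingEnd ℂ) (a i) * z‖ ≤ 1 := by
        rw [div_le_one (norm_pos_iff.2 (denom_ne (ha i) hz))]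
        exact (factor_lt (ha i) hz).le
      have hr0 : (0:ℝ) ≤ ‖z - a i‖ / ‖1 - (starRingEnd ℂ) (a i) * z‖ := by positivity
      have hp1 : (∏ k ∈ s', ‖z - a k‖ / ‖1 - (starRingEnd ℂ) (a k) * z‖) ≤ 1 :=
        Finset.prod_le_one (fun k _ => by positivity) (fun k _ => by
          rw [div_le_one (norm_pos_iff.2 (denom_ne (ha k) hz))]
          exact (factor_lt (ha k) hz).le)
      have hp0 : (0:ℝ) ≤ ∏ k ∈ s', ‖z - a k‖ / ‖1 - (starRingEnd ℂ) (a k) * z‖ :=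
        Finset.prod_nonneg fun k _ => by positivity
      nlinarith
  refine (key Finset.univ).trans ?_
  rw [Finset.mul_sum]
  exact Finset.sum_le_sum fun k _ => factor_bound (ha k) hz

end params3

section poly

set_option linter.unusedSectionVars false
set_option linter.unusedVariables false

variable {n : ℕ} {θ : ℝ} {a : Fin n → ℂ}
variable (ha : ∀ k, ‖a k‖ < 1)

lemma PAp_monic : (PAp n a).Monic :=
  Polynomial.monic_prod_of_monic _ _ fun k _ => Polynomial.monic_X_sub_C _

lemma PAp_natDegree : (PAp n a).natDegree = n := by
  rw [PAp, Polynomial.natDegree_prod_of_monic _ _ fun k _ => Polynomial.monic_X_sub_C _]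
  simp [Polynomial.natDegree_X_sub_C]

lemma PCp_factor_natDegree (k : Fin n) :
    (1 - Polynomial.C ((starRingEnd ℂ) (a k)) * Polynomial.X : Polynomial ℂ).natDegree ≤ 1 := by
  apply (Polynomial.natDegree_sub_le _ _).trans
  apply max_le
  · simp
  · exact (Polynomial.natDegree_C_mul_le _ _).trans (by simp)

lemma PCp_natDegree_le : (PCp n a).natDegree ≤ n := by
  have h1 : (PCp n a).natDegree ≤
      ∑ k : Fin n, (1 - Polynomial.C ((starRingEnd ℂ) (a k)) * Polynomial.X).natDegree :=
    Polynomial.natDegree_prod_le Finset.univ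
      (fun k : Fin n => (1 - Polynomial.C ((starRingEnd ℂ) (a k)) * Polynomial.X))
  have h2 : (∑ k : Fin n, (1 - Polynomial.C ((starRingEnd ℂ) (a k)) * Polynomial.X).natDegree)
      ≤ ∑ k : Fin n, 1 := Finset.sum_le_sum fun k _ => PCp_factor_natDegree k
  have h3 : (∑ k : Fin n, 1) = n := by simp
  omega

lemma PCp_coeff_n : (PCp n a).coeff n = ∏ k, (-(starRingEnd ℂ) (a k)) := by
  have h := Polynomial.coeff_prod_of_natDegree_le Finset.univ
    (fun k : Fin n => (1 - Polynomial.C ((starRingEnd ℂ) (a k)) * Polynomial.X)) 1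
    (fun k _ => PCp_factor_natDegree k)
  simp only [Finset.card_univ, Fintype.card_fin, mul_one] at h
  rw [PCp, h]
  congr 1
  ext k
  simp [Polynomial.coeff_one, Polynomial.coeff_C_mul]

include ha

lemma RPp_coeff_n {w : ℂ} (hw : ‖w‖ < 1) :
    (RPp n θ a w).coeff n ≠ 0 := by
  have hPA : (PAp n a).coeff n = 1 := by
    have := PAp_monic (n := n) (a := a)
    rw [Polynomial.Monic, Polynomial.leadingCoeff, PAp_natDegree] at this
    exact this
  rw [RPp, Polynomial.coeff_sub, Polynomial.coeff_C_mul, Polynomial.coeff_C_mul, hPA,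
    PCp_coeff_n, mul_one]
  intro h
  have heq : Complex.exp (θ * Complex.I) = w * ∏ k, (-(starRingEnd ℂ) (a k)) := by
    linear_combination h
  have h1 : ‖Complex.exp (θ * Complex.I)‖ = 1 := Complex.norm_exp_ofReal_mul_I θ
  have h2 : ‖w * ∏ k, (-(starRingEnd ℂ) (a k))‖ < 1 := by
    rw [norm_mul, norm_prod]
    have hp : ∏ k : Fin n, ‖-(starRingEnd ℂ) (a k)‖ ≤ 1 := by
      apply Finset.prod_le_one (fun k _ => norm_nonneg _)
      intro k _
      rw [norm_neg, RCLike.norm_conj]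
      exact (ha k).le
    have hp0 : (0:ℝ) ≤ ∏ k : Fin n, ‖-(starRingEnd ℂ) (a k)‖ :=
      Finset.prod_nonneg fun k _ => norm_nonneg _
    nlinarith [norm_nonneg w]
  rw [heq] at h1
  linarith

lemma RPp_natDegree {w : ℂ} (hw : ‖w‖ < 1) : (RPp n θ a w).natDegree = n := by
  apply le_antisymm
  · apply (Polynomial.natDegree_sub_le _ _).trans
    apply max_le
    · exact (Polynomial.natDegree_C_mul_le _ _).trans (le_of_eq PAp_natDegree)
    · exact (Polynomial.natDegree_C_mul_le _ _).trans PCp_natDegree_le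
  · exact Polynomial.le_natDegree_of_ne_zero (RPp_coeff_n ha hw)

lemma RPp_ne_zero {w : ℂ} (hw : ‖w‖ < 1) : RPp n θ a w ≠ 0 := fun h => by
  have := RPp_coeff_n (θ := θ) ha hw
  rw [h] at this
  simp at this

omit ha in
lemma eval_RPp (w z : ℂ) :
    Polynomial.eval z (RPp n θ a w) = Complex.exp (θ * Complex.I) *
      Polynomial.eval z (PAp n a) - w * Polynomial.eval z (PCp n a) := by
  simp [RPp]

lemma root_iff {w z : ℂ} (hz : ‖z‖ < 1) :
    Polynomial.eval z (RPp n θ a w) = 0 ↔ gBf n θ a z = w := by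
  rw [eval_RPp, gBf, Polynomial.eval_mul, Polynomial.eval_C]
  rw [div_eq_iff (eval_PCp_ne ha hz)]
  constructor
  · intro h; linear_combination h
  · intro h; linear_combination h

lemma root_in_ball {w z : ℂ} (hw : ‖w‖ < 1) (h : Polynomial.eval z (RPp n θ a w) = 0) :
    ‖z‖ < 1 := by
  by_contra hz
  push_neg at hz
  have heval : Complex.exp (θ * Complex.I) * Polynomial.eval z (PAp n a)
      = w * Polynomial.eval z (PCp n a) := by
    rw [eval_RPp] at h
    linear_combination h
  have hPA : ‖Polynomial.eval z (PAp n a)‖ = ∏ k, ‖z - a k‖ := by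
    rw [eval_PAp, norm_prod]
  have hPAfac : ∀ k : Fin n, (0:ℝ) < ‖z - a k‖ := by
    intro k
    rw [norm_pos_iff, sub_ne_zero]
    intro hk
    rw [hk] at hz
    exact absurd (ha k) (not_lt.2 hz)
  have hPApos : (0:ℝ) < ‖Polynomial.eval z (PAp n a)‖ := by
    rw [hPA]; exact Finset.prod_pos fun k _ => hPAfac k
  have hle : ‖Polynomial.eval z (PCp n a)‖ ≤ ‖Polynomial.eval z (PAp n a)‖ := by
    rw [hPA, eval_PCp, norm_prod]
    exact Finset.prod_le_prod (fun k _ => norm_nonneg _) fun k _ => factor_ge (ha k) hz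
  have h1 : ‖Polynomial.eval z (PAp n a)‖ = ‖w‖ * ‖Polynomial.eval z (PCp n a)‖ := by
    have := congrArg (‖·‖) heval
    simpa [norm_mul, Complex.norm_exp_ofReal_mul_I] using this
  nlinarith [norm_nonneg w, norm_nonneg (Polynomial.eval z (PCp n a))]

end poly

lemma rootMult_le_one {p : Polynomial ℂ} {z : ℂ}
    (hd : Polynomial.eval z (Polynomial.derivative p) ≠ 0) : p.rootMultiplicity z ≤ 1 := by
  by_contra h
  push_neg at h
  have hdvd : (Polynomial.X - Polynomial.C z) ^ 2 ∣ p :=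
    dvd_trans (pow_dvd_pow _ h) (Polynomial.pow_rootMultiplicity_dvd p z)
  obtain ⟨q, rfl⟩ := hdvd
  apply hd
  simp [Polynomial.derivative_mul, Polynomial.derivative_pow]

section poly2

set_option linter.unusedSectionVars false
set_option linter.unusedVariables false

variable {n : ℕ} {θ : ℝ} {a : Fin n → ℂ}
variable (ha : ∀ k, ‖a k‖ < 1)
include ha

lemma hasStrictDerivAt_gBf {z : ℂ} (hz : ‖z‖ < 1) :
    HasStrictDerivAt (gBf n θ a)
      ((Polynomial.eval z (Polynomial.derivative (Polynomial.C (Complex.exp (θ * Complex.I)) * PAp n a)) *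
          Polynomial.eval z (PCp n a) -
        Polynomial.eval z (Polynomial.C (Complex.exp (θ * Complex.I)) * PAp n a) *
          Polynomial.eval z (Polynomial.derivative (PCp n a))) /
        (Polynomial.eval z (PCp n a)) ^ 2) z :=
  (Polynomial.hasStrictDerivAt _ z).div (Polynomial.hasStrictDerivAt _ z) (eval_PCp_ne ha hz)

lemma deriv_gBf {z : ℂ} (hz : ‖z‖ < 1) :
    deriv (gBf n θ a) z =
      (Polynomial.eval z (Polynomial.derivative (Polynomial.C (Complex.exp (θ * Complex.I)) * PAp n a)) *
          Polynomial.eval z (PCp n a) -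
        Polynomial.eval z (Polynomial.C (Complex.exp (θ * Complex.I)) * PAp n a) *
          Polynomial.eval z (Polynomial.derivative (PCp n a))) /
        (Polynomial.eval z (PCp n a)) ^ 2 :=
  ((hasStrictDerivAt_gBf ha hz).hasDerivAt).deriv

lemma deriv_rel {w z : ℂ} (hz : ‖z‖ < 1) (hroot : Polynomial.eval z (RPp n θ a w) = 0) :
    Polynomial.eval z (Polynomial.derivative (RPp n θ a w)) =
      deriv (gBf n θ a) z * Polynomial.eval z (PCp n a) := by
  have hC := eval_PCp_ne ha hz
  have hrel : Polynomial.eval z (Polynomial.C (Complex.exp (θ * Complex.I)) * PAp n a) =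
      w * Polynomial.eval z (PCp n a) := by
    rw [eval_RPp] at hroot
    simp only [Polynomial.eval_mul, Polynomial.eval_C]
    linear_combination hroot
  have hder : Polynomial.derivative (RPp n θ a w) =
      Polynomial.derivative (Polynomial.C (Complex.exp (θ * Complex.I)) * PAp n a) -
        Polynomial.C w * Polynomial.derivative (PCp n a) := by
    rw [RPp]
    simp [Polynomial.derivative_sub, Polynomial.derivative_C_mul]
  rw [hder, deriv_gBf ha hz]
  simp only [Polynomial.eval_sub, Polynomial.eval_mul, Polynomial.eval_C] at hrel ⊢
  field_simp
  linear_combination (Polynomial.eval z (Polynomial.derivative (PCp n a))) * hrel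

lemma roots_spec (hn : 1 ≤ n) {w : ℂ} (hw : ‖w‖ < 1)
    (hwc : w ∉ (gBf n θ a) '' {β : ℂ | ‖β‖ < 1 ∧ deriv (gBf n θ a) β = 0}) :
    ((RPp n θ a w).roots.toFinset.card = n) ∧
    (∀ z : ℂ, z ∈ (RPp n θ a w).roots.toFinset ↔ (‖z‖ < 1 ∧ gBf n θ a z = w)) ∧
    (∀ z ∈ (RPp n θ a w).roots.toFinset, deriv (gBf n θ a) z ≠ 0) := by
  classical
  have hR0 : RPp n θ a w ≠ 0 := RPp_ne_zero ha hw
  have hmem : ∀ z : ℂ, z ∈ (RPp n θ a w).roots.toFinset ↔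
      Polynomial.eval z (RPp n θ a w) = 0 := by
    intro z
    rw [Multiset.mem_toFinset, Polynomial.mem_roots hR0]
    exact ⟨fun h => h, fun h => h⟩
  have hiff : ∀ z : ℂ, z ∈ (RPp n θ a w).roots.toFinset ↔ (‖z‖ < 1 ∧ gBf n θ a z = w) := by
    intro z
    rw [hmem]
    constructor
    · intro h
      have hz : ‖z‖ < 1 := root_in_ball ha hw h
      exact ⟨hz, (root_iff ha hz).1 h⟩
    · rintro ⟨hz, hgz⟩
      exact (root_iff ha hz).2 hgz
  have hcrit : ∀ z ∈ (RPp n θ a w).roots.toFinset, deriv (gBf n θ a) z ≠ 0 := by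
    intro z hz hd
    obtain ⟨hz1, hz2⟩ := (hiff z).1 hz
    exact hwc ⟨z, ⟨hz1, hd⟩, hz2⟩
  have hnodup : (RPp n θ a w).roots.Nodup := by
    rw [Multiset.nodup_iff_count_le_one]
    intro z
    by_cases hzr : z ∈ (RPp n θ a w).roots
    · rw [Polynomial.count_roots]
      have hz' : z ∈ (RPp n θ a w).roots.toFinset := Multiset.mem_toFinset.2 hzr
      obtain ⟨hz1, _⟩ := (hiff z).1 hz'
      apply rootMult_le_one
      rw [deriv_rel ha hz1 ((hmem z).1 hz')]
      exact mul_ne_zero (hcrit z hz') (eval_PCp_ne ha hz1)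
    · rw [Multiset.count_eq_zero.2 hzr]
      omega
  have hcard : (RPp n θ a w).roots.toFinset.card = n := by
    rw [Multiset.toFinset_card_of_nodup hnodup]
    rw [Polynomial.splits_iff_card_roots.1 (IsAlgClosed.splits _)]
    exact RPp_natDegree ha hw
  exact ⟨hcard, hiff, hcrit⟩

end poly2

lemma exists_sep {n : ℕ} (z : Fin n → ℂ) (hz : Function.Injective z) :
    ∃ r > 0, ∀ i j, i ≠ j → 2 * r ≤ dist (z i) (z j) := by
  by_cases h : (Finset.univ.offDiag : Finset (Fin n × Fin n)).Nonempty
  · obtain ⟨p, hp, hpm⟩ :=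
      Finset.exists_mem_eq_inf' h (fun p : Fin n × Fin n => dist (z p.1) (z p.2))
    have hpne : p.1 ≠ p.2 := (Finset.mem_offDiag.1 hp).2.2
    have hm0 : 0 < dist (z p.1) (z p.2) := dist_pos.2 fun hd => hpne (hz hd)
    refine ⟨dist (z p.1) (z p.2) / 2, by linarith, fun i j hij => ?_⟩
    have h2 : Finset.univ.offDiag.inf' h (fun p : Fin n × Fin n => dist (z p.1) (z p.2))
        ≤ dist (z i) (z j) :=
      Finset.inf'_le (b := (i, j)) _ (Finset.mem_offDiag.2 ⟨Finset.mem_univ _, Finset.mem_univ _, hij⟩)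
    rw [hpm] at h2
    linarith
  · refine ⟨1, one_pos, fun i j hij => ?_⟩
    exact absurd ⟨(i, j), Finset.mem_offDiag.2 ⟨Finset.mem_univ _, Finset.mem_univ _, hij⟩⟩ h


set_option maxHeartbeats 1000000 in
/-- With `X = {z ∈ 𝔻 : B(z) ∉ 𝒮}` and `Y = 𝔻 ∖ 𝒮`, the restriction of a
Blaschke product `B` of order `n ≥ 1`, as a map from `X` onto `Y`, is a (surjective)
covering map, and it is `n`-sheeted: every fiber has exactly `n` points. -/
theorem stmt10 (n : ℕ) (hn : 1 ≤ n) (B : ℂ → ℂ) (hB : IsBlaschke n B) :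
    ∃ h : Set.MapsTo B {z ∈ ball (0 : ℂ) 1 | B z ∉ critValues B}
        (ball (0 : ℂ) 1 \ critValues B),
      IsCoveringMap (h.restrict B {z ∈ ball (0 : ℂ) 1 | B z ∉ critValues B}
          (ball (0 : ℂ) 1 \ critValues B)) ∧
      Function.Surjective (h.restrict B {z ∈ ball (0 : ℂ) 1 | B z ∉ critValues B}
          (ball (0 : ℂ) 1 \ critValues B)) ∧
      ∀ w ∈ ball (0 : ℂ) 1 \ critValues B,
        ({z ∈ ball (0 : ℂ) 1 | B z ∉ critValues B ∧ B z = w}).ncard = n := by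
  classical
  obtain ⟨θ, a, haball, hBeq⟩ := hB
  have ha : ∀ k, ‖a k‖ < 1 := fun k => by
    have := haball k
    rwa [mem_ball, dist_zero_right] at this
  set g := gBf n θ a with hg
  have hBg : ∀ z ∈ ball (0:ℂ) 1, B z = g z := by
    intro z hz
    rw [hBeq z hz, hg, gBf_eq ha (mem_ball_zero_iff.1 hz)]
  have hderiv : ∀ z ∈ ball (0:ℂ) 1, deriv B z = deriv g z := by
    intro z hz
    apply Filter.EventuallyEq.deriv_eq
    filter_upwards [isOpen_ball.mem_nhds hz] with x hx
    exact hBg x hx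
  have hcrit : critValues B = g '' {β : ℂ | ‖β‖ < 1 ∧ deriv g β = 0} := by
    rw [critValues]
    have hset : {β ∈ ball (0:ℂ) 1 | deriv B β = 0} = {β : ℂ | ‖β‖ < 1 ∧ deriv g β = 0} := by
      ext β
      simp only [Set.mem_setOf_eq, Set.mem_sep_iff, mem_ball_zero_iff]
      constructor
      · rintro ⟨h1, h2⟩
        exact ⟨h1, by rw [← hderiv β (mem_ball_zero_iff.2 h1)]; exact h2⟩
      · rintro ⟨h1, h2⟩
        exact ⟨h1, by rw [hderiv β (mem_ball_zero_iff.2 h1)]; exact h2⟩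
    rw [hset]
    apply Set.image_congr
    intro β hβ
    exact hBg β (mem_ball_zero_iff.2 hβ.1)
  -- continuity of g on the ball
  have hgcont : ContinuousOn g (ball (0:ℂ) 1) := fun z hz =>
    (((hasStrictDerivAt_gBf (θ := θ) ha (mem_ball_zero_iff.1 hz)).hasDerivAt).continuousAt).continuousWithinAt
  have hmaps : Set.MapsTo B {z ∈ ball (0 : ℂ) 1 | B z ∉ critValues B}
      (ball (0 : ℂ) 1 \ critValues B) := by
    rintro z ⟨hz, hznc⟩
    refine ⟨?_, hznc⟩
    rw [mem_ball_zero_iff, hBg z hz]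
    exact norm_gBf_lt_one ha hn (mem_ball_zero_iff.1 hz)
  -- fiber description
  have fiber : ∀ w ∈ ball (0 : ℂ) 1 \ critValues B,
      ((RPp n θ a w).roots.toFinset.card = n) ∧
      (∀ z : ℂ, z ∈ (RPp n θ a w).roots.toFinset ↔ (‖z‖ < 1 ∧ g z = w)) ∧
      (∀ z ∈ (RPp n θ a w).roots.toFinset, deriv g z ≠ 0) := by
    rintro w ⟨hw1, hw2⟩
    rw [hcrit] at hw2
    exact roots_spec ha hn (mem_ball_zero_iff.1 hw1) hw2
  have fiber_set : ∀ w ∈ ball (0 : ℂ) 1 \ critValues B,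
      {z ∈ ball (0 : ℂ) 1 | B z ∉ critValues B ∧ B z = w}
        = ((RPp n θ a w).roots.toFinset : Set ℂ) := by
    intro w hw
    obtain ⟨hcard, hiff, hcritne⟩ := fiber w hw
    ext z
    simp only [Set.mem_setOf_eq, Finset.coe_sort_coe, Finset.mem_coe]
    constructor
    · rintro ⟨hz, _, hBzw⟩
      exact (hiff z).2 ⟨mem_ball_zero_iff.1 hz, by rw [← hBg z hz]; exact hBzw⟩
    · intro hz
      obtain ⟨hz1, hz2⟩ := (hiff z).1 hz
      have hzball : z ∈ ball (0:ℂ) 1 := mem_ball_zero_iff.2 hz1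
      have hBz : B z = w := by rw [hBg z hzball]; exact hz2
      exact ⟨hzball, by rw [hBz]; exact hw.2, hBz⟩
  refine ⟨hmaps, ?_, ?_, ?_⟩
  · -- covering map
    apply isCoveringMap_restrict_of_localData hmaps
    intro w₀ hw₀
    have hw₀n : ‖w₀‖ < 1 := mem_ball_zero_iff.1 hw₀.1
    obtain ⟨hcard, hiff, hcritne⟩ := fiber w₀ hw₀
    -- enumerate the fiber
    let e0 := Finset.equivFinOfCardEq hcard
    let zf : Fin n → ℂ := fun i => (e0.symm i : ℂ)
    have hzmem : ∀ i, zf i ∈ (RPp n θ a w₀).roots.toFinset := fun i => (e0.symm i).2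
    have hzin : ∀ i, ‖zf i‖ < 1 := fun i => ((hiff _).1 (hzmem i)).1
    have hgz : ∀ i, g (zf i) = w₀ := fun i => ((hiff _).1 (hzmem i)).2
    have hdz : ∀ i, deriv g (zf i) ≠ 0 := fun i => hcritne _ (hzmem i)
    have hinj : Function.Injective zf := fun i j hij => by
      have : e0.symm i = e0.symm j := Subtype.ext hij
      exact e0.symm.injective this
    obtain ⟨r, hr0, hrsep⟩ := exists_sep zf hinj
    -- local homeomorphisms from the inverse function theorem
    have hstrict : ∀ i, HasStrictDerivAt g (deriv g (zf i)) (zf i) := fun i => by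
      have h1 := hasStrictDerivAt_gBf (θ := θ) ha (hzin i)
      have h2 := deriv_gBf (θ := θ) ha (hzin i)
      rw [hg, h2]
      exact h1
    let E : Fin n → OpenPartialHomeomorph ℂ ℂ := fun i =>
      ((hstrict i).hasStrictFDerivAt_equiv (hdz i)).toOpenPartialHomeomorph g
    have hEcoe : ∀ i, ⇑(E i) = g := fun i =>
      HasStrictFDerivAt.toOpenPartialHomeomorph_coe _
    have hEsrc : ∀ i, zf i ∈ (E i).source := fun i =>
      HasStrictFDerivAt.mem_toOpenPartialHomeomorph_source _
    -- radii
    have hε : ∀ i : Fin n, ∃ ε > 0, ε ≤ r ∧ ball (zf i) ε ⊆ (E i).source ∩ ball (0:ℂ) 1 := by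
      intro i
      have hopen : IsOpen ((E i).source ∩ ball (0:ℂ) 1) := (E i).open_source.inter isOpen_ball
      have hmem : zf i ∈ (E i).source ∩ ball (0:ℂ) 1 :=
        ⟨hEsrc i, mem_ball_zero_iff.2 (hzin i)⟩
      obtain ⟨ε', hε'0, hε'sub⟩ := Metric.isOpen_iff.1 hopen _ hmem
      refine ⟨min ε' r, lt_min hε'0 hr0, min_le_right _ _, ?_⟩
      exact (Metric.ball_subset_ball (min_le_left _ _)).trans hε'sub
    choose εf hεf0 hεfr hεfsub using hε
    let U : Fin n → Set ℂ := fun i => ball (zf i) (εf i)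
    have hU_src : ∀ i, U i ⊆ (E i).source := fun i =>
      (hεfsub i).trans (Set.inter_subset_left)
    have hU_ball : ∀ i, U i ⊆ ball (0:ℂ) 1 := fun i =>
      (hεfsub i).trans (Set.inter_subset_right)
    have hUdisj : ∀ i j, i ≠ j → Disjoint (U i) (U j) := by
      intro i j hij
      apply Metric.ball_disjoint_ball
      calc εf i + εf j ≤ r + r := add_le_add (hεfr i) (hεfr j)
        _ = 2 * r := by ring
        _ ≤ dist (zf i) (zf j) := hrsep i j hij
    -- images
    have hWopen : ∀ i, IsOpen ((E i) '' (U i)) := fun i =>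
      (E i).isOpen_image_of_subset_source isOpen_ball (hU_src i)
    have hyW : ∀ i, w₀ ∈ (E i) '' (U i) := fun i =>
      ⟨zf i, mem_ball_self (hεf0 i), by rw [hEcoe i]; exact hgz i⟩
    -- properness bound
    haveI : Nonempty (Fin n) := ⟨⟨0, hn⟩⟩
    set K := ∑ k, 4 / (1 - ‖a k‖) with hK
    have hK0 : 0 < K := Finset.sum_pos
      (fun k _ => div_pos (by norm_num) (by linarith [ha k])) Finset.univ_nonempty
    set r1 := (1 + ‖w₀‖) / 2 with hr1def
    have hr1lt : r1 < 1 := by rw [hr1def]; linarith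
    have hw₀r1 : ‖w₀‖ < r1 := by rw [hr1def]; linarith
    set ρ : ℝ := 1 - (1 - r1) / K with hρdef
    have hρ1 : ρ < 1 := by
      rw [hρdef]
      have : 0 < (1 - r1) / K := div_pos (by linarith) hK0
      linarith
    have hρbound : ∀ z : ℂ, ‖z‖ < 1 → ‖g z‖ ≤ r1 → ‖z‖ ≤ ρ := by
      intro z hz hgle
      have h1 := one_sub_norm_gBf_le (θ := θ) ha hz
      rw [← hg, ← hK] at h1
      have h2 : 1 - r1 ≤ (1 - ‖z‖) * K := by linarith
      have h3 : (1 - r1) / K ≤ 1 - ‖z‖ := (div_le_iff₀ hK0).2 (by linarith)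
      rw [hρdef]
      linarith
    set ρ' := max ρ 0 with hρ'def
    have hρ'1 : ρ' < 1 := max_lt hρ1 one_pos
    set Sc := closedBall (0:ℂ) ρ' \ ⋃ i, U i with hScdef
    have hSsub : Sc ⊆ ball (0:ℂ) 1 := by
      rintro z ⟨hz1, -⟩
      rw [mem_ball_zero_iff]
      rw [mem_closedBall_zero_iff] at hz1
      linarith
    have hScomp : IsCompact Sc :=
      (isCompact_closedBall _ _).diff (isOpen_iUnion fun i => isOpen_ball)
    have himg : IsCompact (g '' Sc) := hScomp.image_of_continuousOn (hgcont.mono hSsub)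
    have hw₀img : w₀ ∉ g '' Sc := by
      rintro ⟨z, ⟨hz1, hz2⟩, hgzw⟩
      have hzb : ‖z‖ < 1 := mem_ball_zero_iff.1 (hSsub ⟨hz1, hz2⟩)
      have hzmem' : z ∈ (RPp n θ a w₀).roots.toFinset := (hiff z).2 ⟨hzb, hgzw⟩
      have : z ∈ U (e0 ⟨z, hzmem'⟩) := by
        have hzf : zf (e0 ⟨z, hzmem'⟩) = z := by
          simp only [zf, Equiv.symm_apply_apply]
        have : dist z (zf (e0 ⟨z, hzmem'⟩)) < εf (e0 ⟨z, hzmem'⟩) := by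
          rw [hzf, dist_self]; exact hεf0 _
        exact Metric.mem_ball.2 this
      exact hz2 (Set.mem_iUnion.2 ⟨_, this⟩)
    obtain ⟨ε₁, hε₁0, hε₁sub⟩ := Metric.isOpen_iff.1 himg.isClosed.isOpen_compl w₀ hw₀img
    set ε := min ε₁ ((1 - ‖w₀‖) / 2) with hεdef
    have hε0 : 0 < ε := lt_min hε₁0 (by linarith)
    have hεr1 : ∀ v ∈ ball w₀ ε, ‖v‖ ≤ r1 := by
      intro v hv
      rw [mem_ball, dist_eq_norm] at hv
      have h2 : ‖v‖ - ‖w₀‖ ≤ ‖v - w₀‖ := norm_sub_norm_le _ _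
      have h3 : ‖v - w₀‖ < (1 - ‖w₀‖) / 2 := lt_of_lt_of_le hv (min_le_right _ _)
      rw [hr1def]
      linarith
    set V := ball w₀ ε ∩ ⋂ i, (E i) '' (U i) with hVdef
    have hVopen : IsOpen V := isOpen_ball.inter (isOpen_iInter_of_finite hWopen)
    have hw₀V : w₀ ∈ V := ⟨mem_ball_self hε0, Set.mem_iInter.2 hyW⟩
    -- the local homeomorphisms with common target V
    have hsopen : ∀ i : Fin n, IsOpen (U i ∩ g ⁻¹' V) := fun i =>
      ContinuousOn.isOpen_inter_preimage (hgcont.mono (hU_ball i)) isOpen_ball hVopen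
    let eV : Fin n → OpenPartialHomeomorph ℂ ℂ := fun i => (E i).restrOpen _ (hsopen i)
    have heVsrc : ∀ i, (eV i).source = U i ∩ g ⁻¹' V := by
      intro i
      rw [OpenPartialHomeomorph.restrOpen_source]
      exact Set.inter_eq_self_of_subset_right ((Set.inter_subset_left).trans (hU_src i))
    have heVcoe : ∀ i, ⇑(eV i) = g := fun i => hEcoe i
    refine ⟨n, hn, V, hVopen, hw₀V, eV, ?_, ?_, ?_, ?_, ?_⟩
    · -- EqOn B (eV i) source
      intro i x hx
      rw [heVsrc i] at hx
      rw [heVcoe i]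
      exact hBg x (hU_ball i hx.1)
    · -- target = V
      intro i
      have htg : (eV i).target = (E i).target ∩ ⇑(E i).symm ⁻¹' (U i ∩ g ⁻¹' V) := by
        calc (eV i).target = ((E i).toPartialEquiv.restr (U i ∩ g ⁻¹' V)).target := by
              rw [← OpenPartialHomeomorph.restrOpen_toPartialEquiv]
          _ = (E i).target ∩ ⇑(E i).symm ⁻¹' (U i ∩ g ⁻¹' V) :=
              PartialEquiv.restr_target _ _
      rw [htg]
      ext v
      constructor
      · rintro ⟨hvt, hvs⟩
        rw [Set.mem_preimage] at hvs
        have hgv : g ((E i).symm v) = v := by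
          rw [← hEcoe i]
          exact (E i).right_inv hvt
        rw [← hgv]
        exact hvs.2
      · intro hvV
        obtain ⟨u, huU, huv⟩ := (Set.mem_iInter.1 hvV.2) i
        have husrc : u ∈ (E i).source := hU_src i huU
        have hsymm : (E i).symm v = u := by
          rw [← huv]
          exact (E i).left_inv husrc
        have hgu : g u = v := by rw [← hEcoe i]; exact huv
        refine ⟨?_, ?_⟩
        · rw [← huv]
          exact (E i).map_source husrc
        · rw [Set.mem_preimage, hsymm]
          exact ⟨huU, by rw [Set.mem_preimage, hgu]; exact hvV⟩
    · -- Xs ↔ Ys condition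
      intro i x hx
      rw [heVsrc i] at hx
      have hxball : x ∈ ball (0:ℂ) 1 := hU_ball i hx.1
      have hBx : B x = g x := hBg x hxball
      have hBxball : B x ∈ ball (0:ℂ) 1 := by
        rw [mem_ball_zero_iff, hBx]
        exact norm_gBf_lt_one ha hn (mem_ball_zero_iff.1 hxball)
      constructor
      · rintro ⟨-, h2⟩
        exact ⟨hBxball, h2⟩
      · rintro ⟨-, h2⟩
        exact ⟨hxball, h2⟩
    · -- disjoint sources
      intro i j hij
      rw [heVsrc i, heVsrc j]
      exact (hUdisj i j hij).mono (Set.inter_subset_left) (Set.inter_subset_left)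
    · -- covering of the preimage
      rintro x ⟨⟨hx1, hx2⟩, hx3⟩
      have hBx : B x = g x := hBg x hx1
      rw [hBx] at hx3
      have hgxball : g x ∈ ball w₀ ε := hx3.1
      have hgxr1 : ‖g x‖ ≤ r1 := hεr1 _ hgxball
      have hxρ : ‖x‖ ≤ ρ := hρbound x (mem_ball_zero_iff.1 hx1) hgxr1
      have hxcb : x ∈ closedBall (0:ℂ) ρ' := by
        rw [mem_closedBall_zero_iff]
        exact hxρ.trans (le_max_left _ _)
      have hxU : x ∈ ⋃ i, U i := by
        by_contra hxU
        have hxS : x ∈ Sc := ⟨hxcb, hxU⟩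
        have : g x ∈ g '' Sc := ⟨x, hxS, rfl⟩
        have hball : g x ∈ ball w₀ ε₁ :=
          Metric.ball_subset_ball (min_le_left _ _) hgxball
        exact (hε₁sub hball) this
      obtain ⟨i, hi⟩ := Set.mem_iUnion.1 hxU
      apply Set.mem_iUnion.2
      exact ⟨i, by rw [heVsrc i]; exact ⟨hi, hx3⟩⟩
  · -- surjectivity
    rintro ⟨w, hw⟩
    obtain ⟨hcard, hiff, -⟩ := fiber w hw
    have hne : ((RPp n θ a w).roots.toFinset).Nonempty := by
      rw [← Finset.card_pos, hcard]; omega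
    obtain ⟨z, hz⟩ := hne
    obtain ⟨hz1, hz2⟩ := (hiff z).1 hz
    have hzball : z ∈ ball (0:ℂ) 1 := mem_ball_zero_iff.2 hz1
    have hBz : B z = w := by rw [hBg z hzball]; exact hz2
    refine ⟨⟨z, hzball, ?_⟩, ?_⟩
    · rw [hBz]; exact hw.2
    · exact Subtype.ext hBz
  · -- cardinality of fibers
    intro w hw
    rw [fiber_set w hw, Set.ncard_coe_finset]
    exact (fiber w hw).1
end AuxAll
end

section
/- Let B be a finite Blaschke product of order n ≥ 1, let D_B ⊆ 𝔻 be a nonempty open connected set, and let σ₁, …, σₙ : D_B → 𝔻 be holomorphic functions satisfying B(σᵢ(z)) = z for all z ∈ D_B and all i, whose images σ₁(D_B), …, σₙ(D_B) are pairwise disjoint and whose union covers 𝔻 up to a Lebesgue null set (i.e. 𝔻 ∖ ⋃_{i=1}^{n} σᵢ(D_B) has area measure zero). Then for all holomorphic f, g : 𝔻 → ℂ with ∫_𝔻 |f|² dA < ∞ and ∫_𝔻 |g|² dA < ∞, one has ∑_{i=1}^{n} ∫_{D_B} f(σᵢ(z)) · conj(g(σᵢ(z))) · |σᵢ′(z)|²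 dA(z) = ∫_𝔻 f(w) · conj(g(w)) dA(w). (This is the inner-product-preservation step showing that the map f ↦ ((f∘σᵢ)·σᵢ′)_{i=1}^{n} is an isometry, used to prove that the Bergman-space multiplication operator T_B is unitarily equivalent to a generalized Bergman bundle shift.) -/
open MeasureTheory Metric
open scoped ENNReal

lemma det_restrictScalars_smulRight (c : ℂ) :
    (((1 : ℂ →L[ℂ] ℂ).smulRight c).restrictScalars ℝ).det = Complex.normSq c := by
  have h : ((((1 : ℂ →L[ℂ] ℂ).smulRight c).restrictScalars ℝ : ℂ →L[ℝ] ℂ) : ℂ →ₗ[ℝ] ℂ)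
      = Algebra.lmul ℝ ℂ c := by
    ext z
    simp [mul_comm]
  rw [ContinuousLinearMap.det, h, ← Algebra.norm_apply, Algebra.norm_complex_apply]

lemma memL2_of_lintegral {f : ℂ → ℂ} (h : DifferentiableOn ℂ f (ball (0 : ℂ) 1))
    (h2 : (∫⁻ z in ball (0 : ℂ) 1, (‖f z‖₊ : ℝ≥0∞) ^ 2) < ⊤) :
    MemLp f 2 (volume.restrict (ball (0 : ℂ) 1)) := by
  refine ⟨h.continuousOn.aestronglyMeasurable measurableSet_ball, ?_⟩
  rw [eLpNorm_eq_lintegral_rpow_enorm_toReal two_ne_zero ENNReal.ofNat_ne_top]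
  refine ENNReal.rpow_lt_top_of_nonneg (by positivity) ?_
  have h2' : ((2 : ℝ≥0∞).toReal) = ((2 : ℕ) : ℝ) := by simp
  simp_rw [h2', ENNReal.rpow_natCast, enorm_eq_nnnorm]
  exact h2.ne


/-- If `σ₁, …, σₙ` are holomorphic inverses of a Blaschke product `B` of
order `n ≥ 1` on a nonempty open connected set `D_B ⊆ 𝔻`, with pairwise disjoint images
covering `𝔻` up to a Lebesgue null set, then for all Bergman-space functions `f, g` on `𝔻`,
`∑ᵢ ∫_{D_B} f(σᵢ z) conj(g(σᵢ z)) |σᵢ′(z)|² dA(z) = ∫_𝔻 f conj g dA`. -/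
theorem stmt12 (n : ℕ) (hn : 1 ≤ n) (B : ℂ → ℂ) (hB : IsBlaschke n B)
    (DB : Set ℂ) (hsub : DB ⊆ ball (0 : ℂ) 1) (hne : DB.Nonempty)
    (ho : IsOpen DB) (hc : IsConnected DB)
    (σ : Fin n → ℂ → ℂ)
    (hdiff : ∀ i, DifferentiableOn ℂ (σ i) DB)
    (hmaps : ∀ i, Set.MapsTo (σ i) DB (ball (0 : ℂ) 1))
    (hinv : ∀ i, ∀ z ∈ DB, B (σ i z) = z)
    (hdisj : ∀ i j, i ≠ j → σ i '' DB ∩ σ j '' DB = ∅)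
    (hcover : volume (ball (0 : ℂ) 1 \ ⋃ i, σ i '' DB) = 0)
    (f g : ℂ → ℂ)
    (hf : DifferentiableOn ℂ f (ball (0 : ℂ) 1))
    (hg : DifferentiableOn ℂ g (ball (0 : ℂ) 1))
    (hf2 : (∫⁻ z in ball (0 : ℂ) 1, (‖f z‖₊ : ℝ≥0∞) ^ 2) < ⊤)
    (hg2 : (∫⁻ z in ball (0 : ℂ) 1, (‖g z‖₊ : ℝ≥0∞) ^ 2) < ⊤) :
    ∑ i : Fin n, ∫ z in DB,
        f (σ i z) * (starRingEnd ℂ) (g (σ i z)) * (‖deriv (σ i) z‖ : ℂ) ^ 2 =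
      ∫ w in ball (0 : ℂ) 1, f w * (starRingEnd ℂ) (g w) := by
  set F : ℂ → ℂ := fun w => f w * (starRingEnd ℂ) (g w) with hF
  -- injectivity
  have hinj : ∀ i, Set.InjOn (σ i) DB := by
    intro i x hx y hy h
    rw [← hinv i x hx, ← hinv i y hy, h]
  -- derivatives
  have hders : ∀ i, ∀ z ∈ DB, HasFDerivWithinAt (σ i)
      (((1 : ℂ →L[ℂ] ℂ).smulRight (deriv (σ i) z)).restrictScalars ℝ) DB z := by
    intro i z hz
    have hd : DifferentiableAt ℂ (σ i) z := (hdiff i z hz).differentiableAt (ho.mem_nhds hz)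
    exact ((hasDerivAt_iff_hasFDerivAt.mp hd.hasDerivAt).restrictScalars ℝ).hasFDerivWithinAt
  -- measurable images
  have himg : ∀ i, MeasurableSet (σ i '' DB) := fun i =>
    ho.measurableSet.image_of_continuousOn_injOn (hdiff i).continuousOn (hinj i)
  -- integrability of F on the disc
  have memf : MemLp f 2 (volume.restrict (ball (0 : ℂ) 1)) := memL2_of_lintegral hf hf2
  have memg' : MemLp (fun w => (starRingEnd ℂ) (g w)) 2 (volume.restrict (ball (0 : ℂ) 1)) := by
    have memg : MemLp g 2 (volume.restrict (ball (0 : ℂ) 1)) := memL2_of_lintegral hg hg2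
    refine ⟨(Complex.continuous_conj).comp_aestronglyMeasurable memg.1, ?_⟩
    have : eLpNorm (fun w => (starRingEnd ℂ) (g w)) 2 (volume.restrict (ball (0 : ℂ) 1))
        = eLpNorm g 2 (volume.restrict (ball (0 : ℂ) 1)) := by
      refine eLpNorm_congr_norm_ae (Filter.Eventually.of_forall fun x => ?_)
      simp
    rw [this]; exact memg.2
  have hintF : IntegrableOn F (ball (0 : ℂ) 1) volume := by
    have h1 : MemLp (f • fun w => (starRingEnd ℂ) (g w)) 1 (volume.restrict (ball (0 : ℂ) 1)) :=
      memg'.smul memf (hpqr := ⟨by rw [inv_one, ENNReal.inv_two_add_inv_two]⟩)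
    have : (f • fun w => (starRingEnd ℂ) (g w)) = F := rfl
    rw [this] at h1
    exact memLp_one_iff_integrable.mp h1
  -- change of variables on each piece
  have key : ∀ i, (∫ w in σ i '' DB, F w) =
      ∫ z in DB, f (σ i z) * (starRingEnd ℂ) (g (σ i z)) * (‖deriv (σ i) z‖ : ℂ) ^ 2 := by
    intro i
    rw [integral_image_eq_integral_abs_det_fderiv_smul volume ho.measurableSet (hders i) (hinj i)]
    refine setIntegral_congr_fun ho.measurableSet fun z hz => ?_
    rw [det_restrictScalars_smulRight, abs_of_nonneg (Complex.normSq_nonneg _),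
      Complex.normSq_eq_norm_sq]
    rw [hF]
    simp only [Complex.real_smul]
    push_cast
    ring
  -- union is a.e. the ball
  have hUsub : (⋃ i, σ i '' DB) ⊆ ball (0 : ℂ) 1 :=
    Set.iUnion_subset fun i => (hmaps i).image_subset
  have hae : (⋃ i, σ i '' DB) =ᵐ[volume] ball (0 : ℂ) 1 := by
    rw [MeasureTheory.ae_eq_set]
    constructor
    · rw [Set.diff_eq_empty.mpr hUsub]; simp
    · exact hcover
  have hdisj' : Pairwise (Function.onFun Disjoint fun i => σ i '' DB) := fun i j hij =>
    Set.disjoint_iff_inter_eq_empty.mpr (hdisj i j hij)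
  calc ∑ i : Fin n, ∫ z in DB,
        f (σ i z) * (starRingEnd ℂ) (g (σ i z)) * (‖deriv (σ i) z‖ : ℂ) ^ 2
      = ∑ i : Fin n, ∫ w in σ i '' DB, F w := by
        exact Finset.sum_congr rfl fun i _ => (key i).symm
    _ = ∑' i : Fin n, ∫ w in σ i '' DB, F w := (tsum_fintype _).symm
    _ = ∫ w in ⋃ i, σ i '' DB, F w :=
        (integral_iUnion himg hdisj' (hintF.mono_set hUsub)).symm
    _ = ∫ w in ball (0 : ℂ) 1, F w := setIntegral_congr_set hae
end

section
/- Let n ≥ 1 and 0 ≤ i ≤ n − 1. For every holomorphic function f : 𝔻 → ℂ, one has the identity (in [0, ∞]) n · ∫_𝔻 |z|^{2i} |f(zⁿ)|² dA(z) = ∫_𝔻 |f(w)|² · |w|^{−2(n−i−1)/n} dA(w). In particular, the map f ↦ √n · zⁱ f(zⁿ) is an isometry from the weighted Bergman space of holomorphic functions f on 𝔻 with ∫_𝔻 |f(w)|² |w|^{−2(n−i−1)/n} dA(w) < ∞ into the Bergman space L²_a(𝔻); this realizes the restriction of the multiplication operator T_{zⁿ} on L²_a(𝔻) to its reducing subspace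 spanned by {z^l : l ≡ i mod n} as multiplication by z on a weighted Bergman space. -/
open MeasureTheory Metric
open scoped ENNReal
open Complex
open scoped NNReal Real

section helpers
lemma my_det (c : ℂ) : ((ContinuousLinearMap.smulRight (1 : ℂ →L[ℂ] ℂ) c).restrictScalars ℝ).det
    = Complex.normSq c := by
  have h : (((ContinuousLinearMap.smulRight (1 : ℂ →L[ℂ] ℂ) c).restrictScalars ℝ).toLinearMap)
      = Algebra.lmul ℝ ℂ c := by
    apply LinearMap.ext; intro w; simp [mul_comm]
  rw [ContinuousLinearMap.det, h, ← Algebra.norm_apply, Algebra.norm_complex_apply]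

lemma cov_exp (Q : Set ℂ) (hQ : MeasurableSet Q) (hinj : Set.InjOn Complex.exp Q)
    (G : ℂ → ℝ≥0∞) :
    ∫⁻ z in Complex.exp '' Q, G z =
      ∫⁻ w in Q, ENNReal.ofReal (Complex.normSq (Complex.exp w)) * G (Complex.exp w) := by
  rw [lintegral_image_eq_lintegral_abs_det_fderiv_mul volume hQ
    (f' := fun w => (ContinuousLinearMap.smulRight (1 : ℂ →L[ℂ] ℂ)
      (Complex.exp w)).restrictScalars ℝ)
    (fun w _ => ((Complex.hasDerivAt_exp w).hasFDerivAt.restrictScalars ℝ).hasFDerivWithinAt)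
    hinj G]
  refine lintegral_congr fun w => ?_
  rw [my_det, _root_.abs_of_nonneg (Complex.normSq_nonneg _)]

lemma cov_mul (c : ℂ) (hc : c ≠ 0) (Q : Set ℂ) (hQ : MeasurableSet Q) (G : ℂ → ℝ≥0∞) :
    ∫⁻ z in (fun w => c * w) '' Q, G z =
      ∫⁻ w in Q, ENNReal.ofReal (Complex.normSq c) * G (c * w) := by
  have hd : ∀ w : ℂ, HasDerivAt (fun w => c * w) c w := fun w => by
    simpa using (hasDerivAt_id w).const_mul c
  rw [lintegral_image_eq_lintegral_abs_det_fderiv_mul volume hQ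
    (f' := fun _ => (ContinuousLinearMap.smulRight (1 : ℂ →L[ℂ] ℂ) c).restrictScalars ℝ)
    (fun w _ => (((hd w).hasFDerivAt).restrictScalars ℝ).hasFDerivWithinAt)
    (fun x _ y _ hxy => mul_left_cancel₀ hc hxy) G]
  refine lintegral_congr fun w => ?_
  rw [my_det, _root_.abs_of_nonneg (Complex.normSq_nonneg _)]

lemma cov_add (c : ℂ) (Q : Set ℂ) (hQ : MeasurableSet Q) (G : ℂ → ℝ≥0∞) :
    ∫⁻ z in (fun w => w + c) '' Q, G z = ∫⁻ w in Q, G (w + c) := by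
  have hd : ∀ w : ℂ, HasDerivAt (fun w => w + c) 1 w := fun w => by
    simpa using (hasDerivAt_id w).add_const c
  rw [lintegral_image_eq_lintegral_abs_det_fderiv_mul volume hQ
    (f' := fun _ => (ContinuousLinearMap.smulRight (1 : ℂ →L[ℂ] ℂ) 1).restrictScalars ℝ)
    (fun w _ => (((hd w).hasFDerivAt).restrictScalars ℝ).hasFDerivWithinAt)
    (fun x _ y _ hxy => by simpa using hxy) G]
  refine lintegral_congr fun w => ?_
  rw [my_det]
  simp

lemma null_ray (x : ℂ) : volume {z : ℂ | ∃ r : ℝ, z = (r : ℂ) * x} = 0 := by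
  have hne : (Submodule.span ℝ {x} : Submodule ℝ ℂ) ≠ ⊤ := by
    intro hsp
    rcases eq_or_ne x 0 with rfl | hx
    · have h0 : (Submodule.span ℝ ({(0:ℂ)} : Set ℂ)) = ⊥ := Submodule.span_zero_singleton ℝ
      rw [h0] at hsp
      exact absurd hsp bot_ne_top
    · have h1 : Module.finrank ℝ (Submodule.span ℝ ({x} : Set ℂ)) = 1 :=
        finrank_span_singleton hx
      rw [hsp, finrank_top] at h1
      rw [Complex.finrank_real_complex] at h1
      norm_num at h1
  refine measure_mono_null ?_ (Measure.addHaar_submodule volume _ hne)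
  rintro z ⟨r, rfl⟩
  have h2 : (r : ℂ) * x = r • x := (Complex.real_smul).symm
  rw [h2]
  exact Submodule.smul_mem _ r (Submodule.mem_span_singleton_self x)

lemma exp_injOn {Q : Set ℂ} {a b : ℝ} (hb : b - a ≤ 2 * Real.pi)
    (hQ : ∀ w ∈ Q, w.im ∈ Set.Ioo a b) : Set.InjOn Complex.exp Q := by
  intro w1 h1 w2 h2 he
  rcases Complex.exp_eq_exp_iff_exists_int.mp he with ⟨m, hm⟩
  have him : w1.im = w2.im + m * (2 * Real.pi) := by
    have := congrArg Complex.im hm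
    simpa using this
  have h1' := hQ _ h1
  have h2' := hQ _ h2
  have hm0 : m = 0 := by
    have hpi := Real.pi_pos
    have hlt1 : (m : ℝ) < 1 := by nlinarith [h1'.2, h2'.1]
    have hgt1 : (-1 : ℝ) < m := by nlinarith [h1'.1, h2'.2]
    have hmm : -1 < m ∧ m < 1 := ⟨by exact_mod_cast hgt1, by exact_mod_cast hlt1⟩
    omega
  rw [hm0] at hm
  simpa using hm

lemma enorm_normSq (ζ : ℂ) :
    ENNReal.ofReal (Complex.normSq ζ) = ((‖ζ‖₊ : ℝ≥0∞)) ^ 2 := by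
  rw [← Complex.sq_norm, ENNReal.ofReal_pow (norm_nonneg _),
    ofReal_norm_eq_enorm, enorm_eq_nnnorm]
end helpers

set_option maxHeartbeats 2000000 in
theorem stmt13_key (n : ℕ) (hn : 1 ≤ n) (i : ℕ) (f : ℂ → ℂ) :
    (n : ℝ≥0∞) *
        ∫⁻ z in ball (0 : ℂ) 1, (‖z‖₊ : ℝ≥0∞) ^ (2 * i) * (‖f (z ^ n)‖₊ : ℝ≥0∞) ^ 2 =
      ∫⁻ w in ball (0 : ℂ) 1,
        (‖f w‖₊ : ℝ≥0∞) ^ 2 * (‖w‖₊ : ℝ≥0∞) ^ (-(2 * ((n : ℝ) - i - 1) / n)) := by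
  have hpi := Real.pi_pos
  have hn0 : (n : ℝ) ≠ 0 := by positivity
  have hnR : (1 : ℝ) ≤ n := by exact_mod_cast hn
  set θ : ℝ := Real.pi / n with hθdef
  have hθpos : 0 < θ := by positivity
  have hnθ : (n : ℝ) * θ = Real.pi := by rw [hθdef]; field_simp
  have hθπ : θ ≤ Real.pi := by
    rw [hθdef]
    calc Real.pi / n ≤ Real.pi / 1 := by
          apply div_le_div_of_nonneg_left hpi.le one_pos hnR
      _ = Real.pi := by ring
  set g : ℂ → ℝ≥0∞ := fun z => (‖z‖₊ : ℝ≥0∞) ^ (2 * i) * (‖f (z ^ n)‖₊ : ℝ≥0∞) ^ 2 with hgdef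
  set h : ℂ → ℝ≥0∞ := fun w =>
    (‖f w‖₊ : ℝ≥0∞) ^ 2 * (‖w‖₊ : ℝ≥0∞) ^ (-(2 * ((n : ℝ) - i - 1) / n)) with hhdef
  set U : ℕ → Set ℂ := fun k =>
    {w : ℂ | w.re < 0 ∧ w.im ∈ Set.Ioo ((2 * (k : ℝ) - 1) * θ) ((2 * (k : ℝ) + 1) * θ)}
    with hUdef
  set V : Set ℂ := {w : ℂ | w.re < 0 ∧ w.im ∈ Set.Ioo (-Real.pi) Real.pi} with hVdef
  have hUopen : ∀ k, IsOpen (U k) := fun k =>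
    (isOpen_Iio.preimage Complex.continuous_re).inter
      (isOpen_Ioo.preimage Complex.continuous_im)
  have hVopen : IsOpen V :=
    (isOpen_Iio.preimage Complex.continuous_re).inter
      (isOpen_Ioo.preimage Complex.continuous_im)
  have hinjU : ∀ k, Set.InjOn Complex.exp (U k) := fun k =>
    exp_injOn (by nlinarith) (fun w hw => hw.2)
  have hinjV : Set.InjOn Complex.exp V :=
    exp_injOn (by linarith) (fun w hw => hw.2)
  have hinjW : Set.InjOn Complex.exp
      {w : ℂ | w.im ∈ Set.Ioo (-θ) ((2 * (n : ℝ) - 1) * θ)} :=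
    exp_injOn (by nlinarith [hnθ]) (fun w hw => hw)
  have hUW : ∀ k : ℕ, k < n →
      U k ⊆ {w : ℂ | w.im ∈ Set.Ioo (-θ) ((2 * (n : ℝ) - 1) * θ)} := by
    intro k hk w hw
    have hkR : (k : ℝ) + 1 ≤ n := by exact_mod_cast hk
    have h1 := hw.2.1
    have h2 := hw.2.2
    constructor <;> nlinarith
  set T : ℕ → Set ℂ := fun k => Complex.exp '' U k with hTdef
  have hTopen : ∀ k, IsOpen (T k) := fun k => Complex.isOpenMap_exp _ (hUopen k)
  have hTball : ∀ k, T k ⊆ ball (0 : ℂ) 1 := by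
    rintro k z ⟨w, hw, rfl⟩
    rw [mem_ball_zero_iff, Complex.norm_exp]
    exact Real.exp_lt_one_iff.mpr hw.1
  -- the integrand over the strip
  set Fg : ℂ → ℝ≥0∞ := fun w =>
    ENNReal.ofReal (Complex.normSq (Complex.exp w)) * g (Complex.exp w) with hFgdef
  set Fh : ℂ → ℝ≥0∞ := fun w =>
    ENNReal.ofReal (Complex.normSq (Complex.exp w)) * h (Complex.exp w) with hFhdef
  -- each sector integral equals the base strip integral
  have hsector : ∀ k : ℕ, k < n → ∫⁻ z in T k, g z = ∫⁻ w in U 0, Fg w := by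
    intro k hk
    set c : ℂ := ((2 * (k : ℝ) * θ : ℝ) : ℂ) * Complex.I with hcdef
    have hcre : c.re = 0 := by simp [hcdef]
    have hcim : c.im = 2 * (k : ℝ) * θ := by simp [hcdef]
    have hUk : U k = (fun w => w + c) '' U 0 := by
      ext w
      constructor
      · intro hw
        refine ⟨w - c, ⟨?_, ?_, ?_⟩, by ring⟩
        · rw [Complex.sub_re, hcre]; simpa using hw.1
        · rw [Complex.sub_im, hcim]
          have := hw.2.1
          push_cast at this ⊢
          nlinarith
        · rw [Complex.sub_im, hcim]
          have := hw.2.2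
          push_cast at this ⊢
          nlinarith
      · rintro ⟨v, hv, rfl⟩
        refine ⟨?_, ?_, ?_⟩
        · rw [Complex.add_re, hcre]; simpa using hv.1
        · rw [Complex.add_im, hcim]
          have := hv.2.1
          push_cast at this ⊢
          nlinarith
        · rw [Complex.add_im, hcim]
          have := hv.2.2
          push_cast at this ⊢
          nlinarith
    have hFgc : ∀ w : ℂ, Fg (w + c) = Fg w := by
      intro w
      have hec : ‖Complex.exp c‖ = 1 := by
        rw [Complex.norm_exp, hcre, Real.exp_zero]
      have hecn : (Complex.exp c) ^ n = 1 := by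
        rw [← Complex.exp_nat_mul]
        have harg : (n : ℂ) * c = (k : ℂ) * (2 * (Real.pi : ℂ) * Complex.I) := by
          rw [hcdef]
          have : (n : ℝ) * (2 * (k : ℝ) * θ) = (k : ℝ) * (2 * Real.pi) := by
            nlinarith [hnθ]
          push_cast
          calc (n : ℂ) * (((2:ℂ) * (k:ℂ) * (θ:ℂ)) * Complex.I)
              = ((n : ℝ) * (2 * (k : ℝ) * θ) : ℝ) * Complex.I := by push_cast; ring
            _ = (((k : ℝ) * (2 * Real.pi) : ℝ) : ℂ) * Complex.I := by rw [this]
            _ = (k : ℂ) * (2 * (Real.pi : ℂ) * Complex.I) := by push_cast; ring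
        rw [harg]
        exact_mod_cast Complex.exp_int_mul_two_pi_mul_I (k : ℤ)
      have hnn : ‖Complex.exp c‖₊ = 1 := by
        ext
        simp [coe_nnnorm, hec]
      rw [hFgdef]
      simp only
      rw [Complex.exp_add]
      congr 1
      · rw [Complex.normSq_mul]
        have : Complex.normSq (Complex.exp c) = 1 := by
          rw [Complex.normSq_eq_norm_sq, hec]; norm_num
        rw [this, mul_one]
      · rw [hgdef]
        simp only
        rw [mul_pow, hecn, mul_one, nnnorm_mul, hnn, mul_one]
    calc ∫⁻ z in T k, g z = ∫⁻ w in U k, Fg w :=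
          cov_exp (U k) (hUopen k).measurableSet (hinjU k) g
      _ = ∫⁻ w in (fun w => w + c) '' U 0, Fg w := by rw [hUk]
      _ = ∫⁻ w in U 0, Fg (w + c) := cov_add c (U 0) (hUopen 0).measurableSet Fg
      _ = ∫⁻ w in U 0, Fg w := lintegral_congr fun w => hFgc w
  -- pairwise disjointness of the sectors
  have hdisj : Pairwise (Function.onFun Disjoint fun k : Fin n => T (k : ℕ)) := by
    intro k l hkl
    rw [Function.onFun, Set.disjoint_left]
    rintro z ⟨w1, hw1, rfl⟩ ⟨w2, hw2, hee⟩
    have hw12 : w2 = w1 := hinjW (hUW l l.2 hw2) (hUW k k.2 hw1) hee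
    rw [hw12] at hw2
    have h1 := hw1.2.1
    have h2 := hw1.2.2
    have h3 := hw2.2.1
    have h4 := hw2.2.2
    have hkl1 : ((k : ℕ) : ℝ) < (l : ℕ) + 1 := by nlinarith
    have hkl2 : ((l : ℕ) : ℝ) < (k : ℕ) + 1 := by nlinarith
    have hkl1' : (k : ℕ) < (l : ℕ) + 1 := by exact_mod_cast hkl1
    have hkl2' : (l : ℕ) < (k : ℕ) + 1 := by exact_mod_cast hkl2
    exact hkl (Fin.ext (by omega))
  -- rays
  set Ray : ℕ → Set ℂ := fun k =>
    {z : ℂ | ∃ r : ℝ, z = (r : ℂ) * Complex.exp ((((2 * (k : ℝ) + 1) * θ : ℝ) : ℂ) * Complex.I)}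
    with hRaydef
  -- covering
  have hcover : ball (0 : ℂ) 1 ⊆ (⋃ k : Fin n, T (k : ℕ)) ∪ ⋃ k : Fin n, Ray (k : ℕ) := by
    intro z hz
    by_cases hz0 : z = 0
    · right
      exact Set.mem_iUnion.mpr ⟨⟨0, hn⟩, ⟨0, by simp [hz0]⟩⟩
    · set ρ : ℝ := Real.log ‖z‖ with hρdef
      have habs1 : ‖z‖ < 1 := by
        rw [mem_ball_zero_iff] at hz; exact hz
      have habs0 : 0 < ‖z‖ := norm_pos_iff.mpr hz0
      have hρ : ρ < 0 := Real.log_neg habs0 habs1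
      set φ : ℝ := Complex.arg z with hφdef
      have hφ1 : -Real.pi < φ := Complex.neg_pi_lt_arg z
      have hφ2 : φ ≤ Real.pi := Complex.arg_le_pi z
      set x : ℝ := if -θ < φ then φ else φ + 2 * Real.pi with hxdef
      have hx1 : -θ < x := by
        rw [hxdef]; split_ifs with hc
        · exact hc
        · push_neg at hc; linarith
      have hx2 : x ≤ 2 * Real.pi - θ := by
        rw [hxdef]; split_ifs with hc
        · linarith
        · push_neg at hc; linarith
      have hlog : Complex.log z = (ρ : ℂ) + (φ : ℂ) * Complex.I := by
        apply Complex.ext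
        · simp [Complex.log_re, hρdef]
        · simp [Complex.log_im, hφdef]
      have hzexp : Complex.exp ((ρ : ℂ) + (x : ℂ) * Complex.I) = z := by
        rw [hxdef]
        split_ifs with hc
        · rw [← hlog]; exact Complex.exp_log hz0
        · have harr : ((ρ : ℂ) + ((φ + 2 * Real.pi : ℝ) : ℂ) * Complex.I)
              = ((ρ : ℂ) + (φ : ℂ) * Complex.I) + 2 * (Real.pi : ℂ) * Complex.I := by
            push_cast; ring
          rw [harr, Complex.exp_add, ← hlog, Complex.exp_log hz0,
            Complex.exp_two_pi_mul_I, mul_one]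
      set y : ℝ := (x / θ + 1) / 2 with hydef
      have hxθ1 : -1 < x / θ := by rw [lt_div_iff₀ hθpos]; linarith
      have hxθ2 : x / θ ≤ 2 * (n : ℝ) - 1 := by rw [div_le_iff₀ hθpos]; nlinarith [hnθ]
      have hy0 : 0 < y := by rw [hydef]; linarith
      have hyn : y ≤ (n : ℝ) := by rw [hydef]; linarith
      have hxy : x = (2 * y - 1) * θ := by
        rw [hydef]; field_simp; ring
      by_cases hint : ∃ m : ℤ, (m : ℝ) = y
      · obtain ⟨m, hm⟩ := hint
        have hm1 : 1 ≤ m := by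
          have h0m : (0 : ℤ) < m := by exact_mod_cast hm ▸ hy0
          omega
        have hmn : m ≤ (n : ℤ) := by
          have : (m : ℝ) ≤ (n : ℝ) := by rw [hm]; exact hyn
          exact_mod_cast this
        right
        set k : ℕ := (m - 1).toNat with hkdef
        have hkn : k < n := by omega
        have hkR : ((k : ℕ) : ℝ) = (m : ℝ) - 1 := by
          have ht : ((m - 1).toNat : ℤ) = m - 1 := Int.toNat_of_nonneg (by omega)
          have := congrArg (fun q : ℤ => (q : ℝ)) ht
          push_cast at this
          rw [hkdef]
          linarith
        refine Set.mem_iUnion.mpr ⟨⟨k, hkn⟩, ⟨Real.exp ρ, ?_⟩⟩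
        have hxk : x = (2 * (k : ℝ) + 1) * θ := by rw [hxy, hkR, ← hm]; ring
        rw [← hzexp, Complex.exp_add, ← Complex.ofReal_exp]
        simp only [Fin.val_mk]
        rw [← hxk]
      · left
        have hy1 : ((⌈y⌉ : ℤ) : ℝ) - 1 < y := by
          have := Int.ceil_lt_add_one y; linarith
        have hy2 : y < ((⌈y⌉ : ℤ) : ℝ) :=
          lt_of_le_of_ne (Int.le_ceil y) (fun hcon => hint ⟨⌈y⌉, hcon.symm⟩)
        have hc1 : 1 ≤ ⌈y⌉ := Int.ceil_pos.mpr hy0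
        have hcn : ⌈y⌉ ≤ (n : ℤ) := Int.ceil_le.mpr (by exact_mod_cast hyn)
        set k : ℕ := (⌈y⌉ - 1).toNat with hkdef
        have hkn : k < n := by omega
        have hkR : ((k : ℕ) : ℝ) = ((⌈y⌉ : ℤ) : ℝ) - 1 := by
          have ht : ((⌈y⌉ - 1).toNat : ℤ) = ⌈y⌉ - 1 := Int.toNat_of_nonneg (by omega)
          have := congrArg (fun q : ℤ => (q : ℝ)) ht
          push_cast at this
          rw [hkdef]
          linarith
        have hky1 : ((k : ℕ) : ℝ) < y := by rw [hkR]; linarith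
        have hky2 : y < ((k : ℕ) : ℝ) + 1 := by rw [hkR]; linarith
        have him : ((ρ : ℂ) + (x : ℂ) * Complex.I).im = x := by
          simp [Complex.add_im, Complex.mul_I_im]
        have hre : ((ρ : ℂ) + (x : ℂ) * Complex.I).re = ρ := by
          simp [Complex.add_re, Complex.mul_I_re]
        refine Set.mem_iUnion.mpr ⟨⟨k, hkn⟩, ⟨(ρ : ℂ) + (x : ℂ) * Complex.I, ⟨?_, ?_, ?_⟩, hzexp⟩⟩
        · rw [hre]; exact hρ
        · show (2 * ((k : ℕ) : ℝ) - 1) * θ < ((ρ : ℂ) + (x : ℂ) * Complex.I).im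
          rw [him, hxy]
          exact mul_lt_mul_of_pos_right (by linarith) hθpos
        · show ((ρ : ℂ) + (x : ℂ) * Complex.I).im < (2 * ((k : ℕ) : ℝ) + 1) * θ
          rw [him, hxy]
          exact mul_lt_mul_of_pos_right (by linarith) hθpos
  -- null complement
  have hnull : volume (ball (0 : ℂ) 1 \ ⋃ k : Fin n, T (k : ℕ)) = 0 := by
    refine measure_mono_null ?_
      (measure_iUnion_null fun k : Fin n =>
        null_ray (Complex.exp ((((2 * ((k : ℕ) : ℝ) + 1) * θ : ℝ) : ℂ) * Complex.I)))
    intro z hz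
    rcases hcover hz.1 with hc | hc
    · exact absurd hc hz.2
    · exact hc
  -- decompose the disc integral into sectors
  have hdecomp : ∫⁻ z in ball (0 : ℂ) 1, g z = ∑' k : Fin n, ∫⁻ z in T (k : ℕ), g z := by
    have hae : ball (0 : ℂ) 1 =ᵐ[volume] ⋃ k : Fin n, T (k : ℕ) := by
      rw [MeasureTheory.ae_eq_set]
      constructor
      · exact hnull
      · rw [Set.diff_eq_empty.mpr (Set.iUnion_subset fun k : Fin n => hTball (k : ℕ))]
        exact measure_empty
    rw [setLIntegral_congr hae, lintegral_iUnion (fun k => (hTopen _).measurableSet) hdisj]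
  have hsum : ∑' k : Fin n, ∫⁻ z in T (k : ℕ), g z = (n : ℝ≥0∞) * ∫⁻ w in U 0, Fg w := by
    have heach : ∀ k : Fin n, ∫⁻ z in T (k : ℕ), g z = ∫⁻ w in U 0, Fg w := fun k =>
      hsector k k.2
    rw [tsum_congr heach, tsum_fintype]
    simp [Finset.sum_const, Finset.card_univ, nsmul_eq_mul]
  -- the slit plane picture
  have hslit : ball (0 : ℂ) 1 ∩ Complex.slitPlane = Complex.exp '' V := by
    ext z
    constructor
    · rintro ⟨hz1, hz2⟩
      have hz0 : z ≠ 0 := Complex.slitPlane_ne_zero hz2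
      refine ⟨Complex.log z, ⟨?_, ?_, ?_⟩, Complex.exp_log hz0⟩
      · rw [Complex.log_re]
        refine Real.log_neg (norm_pos_iff.mpr hz0) ?_
        rw [mem_ball_zero_iff] at hz1
        exact hz1
      · rw [Complex.log_im]; exact Complex.neg_pi_lt_arg z
      · rw [Complex.log_im]
        exact lt_of_le_of_ne (Complex.arg_le_pi z) (Complex.slitPlane_arg_ne_pi hz2)
    · rintro ⟨w, hw, rfl⟩
      constructor
      · rw [mem_ball_zero_iff, Complex.norm_exp]
        exact Real.exp_lt_one_iff.mpr hw.1
      · rw [Complex.mem_slitPlane_iff_arg]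
        constructor
        · have harg : (Complex.exp w).arg = w.im := by
            rw [← Complex.log_im (Complex.exp w),
              Complex.log_exp hw.2.1 (le_of_lt hw.2.2)]
          rw [harg]
          exact ne_of_lt hw.2.2
        · exact Complex.exp_ne_zero w
  have hrhs1 : ∫⁻ w in ball (0 : ℂ) 1, h w = ∫⁻ w in Complex.exp '' V, h w := by
    rw [← hslit]
    refine setLIntegral_congr (MeasureTheory.ae_eq_set.mpr ⟨?_, ?_⟩)
    · refine measure_mono_null ?_ (null_ray 1)
      rintro z ⟨hz1, hz2⟩
      have hns : z ∉ Complex.slitPlane := fun hs => hz2 ⟨hz1, hs⟩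
      rw [Complex.mem_slitPlane_iff] at hns
      push_neg at hns
      refine ⟨z.re, ?_⟩
      apply Complex.ext
      · simp
      · simp [hns.2]
    · rw [Set.diff_eq_empty.mpr Set.inter_subset_left]
      exact measure_empty
  -- scaling from the base strip to the big strip
  have hVU : V = (fun w => (n : ℂ) * w) '' U 0 := by
    have hnn : ((n : ℂ)) ≠ 0 := by exact_mod_cast Nat.cast_ne_zero.mpr (by omega)
    have hre : ∀ w : ℂ, ((n : ℂ) * w).re = (n : ℝ) * w.re := by
      intro w
      simp [Complex.mul_re]
    have him : ∀ w : ℂ, ((n : ℂ) * w).im = (n : ℝ) * w.im := by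
      intro w
      simp [Complex.mul_im]
    have hnpos : (0 : ℝ) < n := by positivity
    ext v
    constructor
    · intro hv
      refine ⟨(((n : ℝ)⁻¹ : ℝ) : ℂ) * v, ⟨?_, ?_, ?_⟩, ?_⟩
      · have : ((((n : ℝ)⁻¹ : ℝ) : ℂ) * v).re = (n : ℝ)⁻¹ * v.re := by
          simp [Complex.mul_re]
        rw [this]
        exact mul_neg_of_pos_of_neg (inv_pos.mpr hnpos) hv.1
      · have heq : ((((n : ℝ)⁻¹ : ℝ) : ℂ) * v).im = (n : ℝ)⁻¹ * v.im := by
          simp [Complex.mul_im]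
        rw [heq]
        have h1 := hv.2.1
        have hin : (n : ℝ)⁻¹ * (n : ℝ) = 1 := inv_mul_cancel₀ hn0
        push_cast
        nlinarith [mul_pos (inv_pos.mpr hnpos) (show (0 : ℝ) < v.im + (n : ℝ) * θ by
          nlinarith [hnθ])]
      · have heq : ((((n : ℝ)⁻¹ : ℝ) : ℂ) * v).im = (n : ℝ)⁻¹ * v.im := by
          simp [Complex.mul_im]
        rw [heq]
        have h2 := hv.2.2
        have hin : (n : ℝ)⁻¹ * (n : ℝ) = 1 := inv_mul_cancel₀ hn0
        push_cast
        nlinarith [mul_pos (inv_pos.mpr hnpos) (show (0 : ℝ) < (n : ℝ) * θ - v.im by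
          nlinarith [hnθ])]
      · show (n : ℂ) * ((((n : ℝ)⁻¹ : ℝ) : ℂ) * v) = v
        rw [← mul_assoc]
        have : (n : ℂ) * (((n : ℝ)⁻¹ : ℝ) : ℂ) = 1 := by
          push_cast
          field_simp
        rw [this, one_mul]
    · rintro ⟨w, hw, rfl⟩
      have h1 := hw.2.1
      have h2 := hw.2.2
      push_cast at h1 h2
      refine ⟨?_, ?_, ?_⟩
      · rw [hre]
        exact mul_neg_of_pos_of_neg hnpos hw.1
      · rw [him]
        nlinarith [hnθ]
      · rw [him]
        nlinarith [hnθ]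
  -- pointwise comparison of strip integrands
  have hpoint : ∀ w : ℂ,
      ENNReal.ofReal (Complex.normSq ((n : ℂ))) * Fh ((n : ℂ) * w)
        = (n : ℝ≥0∞) * ((n : ℝ≥0∞) * Fg w) := by
    intro w
    set t : ℝ≥0∞ := (‖Complex.exp w‖₊ : ℝ≥0∞) with htdef
    have ht0 : t ≠ 0 := by
      rw [htdef]
      exact_mod_cast nnnorm_ne_zero_iff.mpr (Complex.exp_ne_zero w)
    have htT : t ≠ ⊤ := ENNReal.coe_ne_top
    have hexpn : Complex.exp ((n : ℂ) * w) = Complex.exp w ^ n := Complex.exp_nat_mul w n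
    have hnormn : ENNReal.ofReal (Complex.normSq ((n : ℂ))) = (n : ℝ≥0∞) * (n : ℝ≥0∞) := by
      rw [enorm_normSq]
      have hcn : (‖((n : ℕ) : ℂ)‖₊ : ℝ≥0∞) = (n : ℝ≥0∞) := by
        simp
      rw [hcn, sq]
    have hnns : (‖Complex.exp w ^ n‖₊ : ℝ≥0∞) = t ^ n := by
      rw [nnnorm_pow, ENNReal.coe_pow]
    rw [hFhdef, hFgdef]
    simp only
    rw [hexpn, hhdef, hgdef]
    simp only
    rw [enorm_normSq (Complex.exp w ^ n), enorm_normSq (Complex.exp w), hnns, hnormn, ← htdef]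
    have hAB : ((t ^ n : ℝ≥0∞)) ^ 2 * (t ^ n) ^ (-(2 * ((n : ℝ) - i - 1) / n))
        = t ^ 2 * t ^ (2 * i) := by
      have e1 : ((t ^ n : ℝ≥0∞)) ^ 2 = t ^ ((n * 2 : ℕ) : ℝ) := by
        rw [← pow_mul, ENNReal.rpow_natCast]
      have e2 : ((t ^ n : ℝ≥0∞)) ^ (-(2 * ((n : ℝ) - i - 1) / n))
          = t ^ ((n : ℝ) * (-(2 * ((n : ℝ) - i - 1) / n))) := by
        rw [← ENNReal.rpow_natCast t n, ← ENNReal.rpow_mul]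
      have e3 : (t : ℝ≥0∞) ^ 2 * t ^ (2 * i) = t ^ ((2 + 2 * i : ℕ) : ℝ) := by
        rw [← pow_add, ENNReal.rpow_natCast]
      rw [e1, e2, e3, ← ENNReal.rpow_add _ _ ht0 htT]
      congr 1
      push_cast
      field_simp
      ring
    calc (n : ℝ≥0∞) * n * ((t ^ n) ^ 2 * ((‖f (Complex.exp w ^ n)‖₊ : ℝ≥0∞) ^ 2
            * (t ^ n) ^ (-(2 * ((n : ℝ) - i - 1) / n))))
        = (n : ℝ≥0∞) * n * (((t ^ n) ^ 2 * (t ^ n) ^ (-(2 * ((n : ℝ) - i - 1) / n)))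
            * (‖f (Complex.exp w ^ n)‖₊ : ℝ≥0∞) ^ 2) := by ring
      _ = (n : ℝ≥0∞) * n * ((t ^ 2 * t ^ (2 * i))
            * (‖f (Complex.exp w ^ n)‖₊ : ℝ≥0∞) ^ 2) := by rw [hAB]
      _ = (n : ℝ≥0∞) * ((n : ℝ≥0∞) * (t ^ 2 * (t ^ (2 * i)
            * (‖f (Complex.exp w ^ n)‖₊ : ℝ≥0∞) ^ 2))) := by ring
  -- RHS chain
  have hrhs : ∫⁻ w in ball (0 : ℂ) 1, h w
      = (n : ℝ≥0∞) * ((n : ℝ≥0∞) * ∫⁻ w in U 0, Fg w) := by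
    have hnn : ((n : ℂ)) ≠ 0 := by exact_mod_cast Nat.cast_ne_zero.mpr (by omega)
    calc ∫⁻ w in ball (0 : ℂ) 1, h w = ∫⁻ w in Complex.exp '' V, h w := hrhs1
      _ = ∫⁻ w in V, Fh w := cov_exp V hVopen.measurableSet hinjV h
      _ = ∫⁻ w in U 0, ENNReal.ofReal (Complex.normSq ((n : ℂ))) * Fh ((n : ℂ) * w) := by
          rw [hVU]
          exact cov_mul (n : ℂ) hnn (U 0) (hUopen 0).measurableSet Fh
      _ = ∫⁻ w in U 0, (n : ℝ≥0∞) * ((n : ℝ≥0∞) * Fg w) := lintegral_congr hpoint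
      _ = (n : ℝ≥0∞) * ∫⁻ w in U 0, (n : ℝ≥0∞) * Fg w :=
          lintegral_const_mul' _ _ (ENNReal.natCast_ne_top n)
      _ = (n : ℝ≥0∞) * ((n : ℝ≥0∞) * ∫⁻ w in U 0, Fg w) := by
          rw [lintegral_const_mul' _ _ (ENNReal.natCast_ne_top n)]
  rw [hdecomp, hsum, hrhs]

/-- For `n ≥ 1`, `0 ≤ i ≤ n - 1` and every holomorphic `f : 𝔻 → ℂ`, one
has (in `[0,∞]`) `n ∫_𝔻 |z|^{2i} |f(zⁿ)|² dA(z) = ∫_𝔻 |f(w)|² |w|^{-2(n-i-1)/n} dA(w)`.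
In particular `f ↦ √n ⋅ zⁱ f(zⁿ)` is an isometry from the weighted Bergman space with
weight `|w|^{-2(n-i-1)/n}` into the Bergman space `L²ₐ(𝔻)`. -/
theorem stmt13 (n : ℕ) (hn : 1 ≤ n) (i : ℕ) (hi : i ≤ n - 1)
    (f : ℂ → ℂ) (hf : DifferentiableOn ℂ f (ball (0 : ℂ) 1)) :
    (n : ℝ≥0∞) *
        ∫⁻ z in ball (0 : ℂ) 1, (‖z‖₊ : ℝ≥0∞) ^ (2 * i) * (‖f (z ^ n)‖₊ : ℝ≥0∞) ^ 2 =
      (∫⁻ w in ball (0 : ℂ) 1,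
        (‖f w‖₊ : ℝ≥0∞) ^ 2 * (‖w‖₊ : ℝ≥0∞) ^ (-(2 * ((n : ℝ) - i - 1) / n))) ∧
    DifferentiableOn ℂ (fun z => (Real.sqrt n : ℂ) * z ^ i * f (z ^ n)) (ball (0 : ℂ) 1) ∧
    ((∫⁻ w in ball (0 : ℂ) 1,
        (‖f w‖₊ : ℝ≥0∞) ^ 2 * (‖w‖₊ : ℝ≥0∞) ^ (-(2 * ((n : ℝ) - i - 1) / n))) < ⊤ →
      ∫⁻ z in ball (0 : ℂ) 1, (‖(Real.sqrt n : ℂ) * z ^ i * f (z ^ n)‖₊ : ℝ≥0∞) ^ 2 =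
        ∫⁻ w in ball (0 : ℂ) 1,
          (‖f w‖₊ : ℝ≥0∞) ^ 2 * (‖w‖₊ : ℝ≥0∞) ^ (-(2 * ((n : ℝ) - i - 1) / n))) := by
  have hkey := stmt13_key n hn i f
  have hmaps : Set.MapsTo (fun z : ℂ => z ^ n) (ball (0 : ℂ) 1) (ball (0 : ℂ) 1) := by
    intro z hz
    rw [mem_ball_zero_iff] at hz ⊢
    rw [norm_pow]
    exact pow_lt_one₀ (norm_nonneg z) hz (by omega)
  have hdiff : DifferentiableOn ℂ (fun z => (Real.sqrt n : ℂ) * z ^ i * f (z ^ n))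
      (ball (0 : ℂ) 1) := by
    refine DifferentiableOn.mul ?_ ?_
    · exact (differentiableOn_const _).mul ((differentiable_pow i).differentiableOn)
    · exact hf.comp ((differentiable_pow n).differentiableOn) hmaps
  have hsq : ((‖((Real.sqrt n : ℝ) : ℂ)‖₊ : ℝ≥0∞)) ^ 2 = (n : ℝ≥0∞) := by
    have h1 : (‖((Real.sqrt n : ℝ) : ℂ)‖₊ : ℝ≥0) ^ 2 = (n : ℝ≥0) := by
      apply NNReal.coe_injective
      push_cast
      rw [Complex.norm_real, Real.norm_eq_abs, _root_.abs_of_nonneg (Real.sqrt_nonneg _),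
        Real.sq_sqrt (Nat.cast_nonneg n)]
    rw [← ENNReal.coe_pow, h1]
    simp
  have hint : ∀ z : ℂ, (‖(Real.sqrt n : ℂ) * z ^ i * f (z ^ n)‖₊ : ℝ≥0∞) ^ 2
      = (n : ℝ≥0∞) * ((‖z‖₊ : ℝ≥0∞) ^ (2 * i) * (‖f (z ^ n)‖₊ : ℝ≥0∞) ^ 2) := by
    intro z
    rw [nnnorm_mul, nnnorm_mul, nnnorm_pow]
    push_cast
    rw [mul_pow, mul_pow, hsq, ← pow_mul]
    ring_nf
  refine ⟨hkey, hdiff, fun _ => ?_⟩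
  calc ∫⁻ z in ball (0 : ℂ) 1, (‖(Real.sqrt n : ℂ) * z ^ i * f (z ^ n)‖₊ : ℝ≥0∞) ^ 2
      = ∫⁻ z in ball (0 : ℂ) 1,
          (n : ℝ≥0∞) * ((‖z‖₊ : ℝ≥0∞) ^ (2 * i) * (‖f (z ^ n)‖₊ : ℝ≥0∞) ^ 2) :=
        lintegral_congr hint
    _ = (n : ℝ≥0∞) *
          ∫⁻ z in ball (0 : ℂ) 1, (‖z‖₊ : ℝ≥0∞) ^ (2 * i) * (‖f (z ^ n)‖₊ : ℝ≥0∞) ^ 2 :=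
        lintegral_const_mul' _ _ (ENNReal.natCast_ne_top n)
    _ = _ := hkey
end
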